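/- arXiv:2006.12206 — 6 statements merged into one kernel-verified Lean document; each statement's English description precedes it below -/
import Mathlib

section
/- Let q ∈ L¹(ℝ) be complex-valued, and let λ ∈ ℂ with Im λ ≥ 0 and λ ≠ 0. Define the map Φ on bounded measurable functions f : ℝ → ℂ by (Φf)(x) = ∫_x^∞ D(t−x,λ) q(t) f(t) dt. Then for every bounded measurable f and every n ∈ ℕ, the n-fold iterate satisfies sup_{x∈ℝ} |(Φⁿ f)(x)| ≤ (‖q‖_{L¹}/|λ|)ⁿ / n! · sup_{x∈ℝ} |f(x)|. -/
open MeasureTheory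

/-- The kernel `D(y,λ) = (e^{2iλy} - 1)/(2iλ)` for `y > 0`, extended by `0`. -/
noncomputable def D (lam : ℂ) (y : ℝ) : ℂ :=
  if 0 < y then (Complex.exp (2 * Complex.I * lam * y) - 1) / (2 * Complex.I * lam) else 0

/-- The integral operator `(Φ f)(x) = ∫_x^∞ D(t-x,λ) q(t) f(t) dt`. -/
noncomputable def Phi (q : ℝ → ℂ) (lam : ℂ) (f : ℝ → ℂ) : ℝ → ℂ :=
  fun x => ∫ t in Set.Ioi x, D lam (t - x) * q t * f t

section keylemma

variable {w : ℝ → ℝ}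

lemma F_antitone (hw : Integrable w) (hw0 : ∀ t, 0 ≤ w t) :
    Antitone (fun x => ∫ t in Set.Ioi x, w t) := fun a b hab =>
  setIntegral_mono_set hw.integrableOn (ae_of_all _ hw0)
    ((Set.Ioi_subset_Ioi hab).eventuallyLE)

lemma F_nonneg (hw0 : ∀ t, 0 ≤ w t) (x : ℝ) : 0 ≤ ∫ t in Set.Ioi x, w t :=
  setIntegral_nonneg measurableSet_Ioi fun t _ => hw0 t

lemma F_le (hw : Integrable w) (hw0 : ∀ t, 0 ≤ w t) (x : ℝ) :
    ∫ t in Set.Ioi x, w t ≤ ∫ t, w t :=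
  setIntegral_le_integral hw (ae_of_all _ hw0)

lemma g_int (hwm : Measurable w) (hw : Integrable w) (hw0 : ∀ t, 0 ≤ w t) (n : ℕ) :
    Integrable (fun t => w t * (∫ s in Set.Ioi t, w s) ^ n) := by
  refine (hw.mul_const ((∫ t, w t) ^ n)).mono'
    ((hwm.mul (((F_antitone hw hw0).measurable).pow_const n)).aestronglyMeasurable)
    (ae_of_all _ fun t => ?_)
  have h1 : 0 ≤ (∫ s in Set.Ioi t, w s) := F_nonneg hw0 t
  have h2 : (∫ s in Set.Ioi t, w s) ^ n ≤ (∫ t, w t) ^ n :=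
    pow_le_pow_left₀ h1 (F_le hw hw0 t) n
  have : 0 ≤ w t * (∫ s in Set.Ioi t, w s) ^ n := mul_nonneg (hw0 t) (pow_nonneg h1 n)
  rw [Real.norm_eq_abs, abs_of_nonneg this]
  exact mul_le_mul_of_nonneg_left h2 (hw0 t)

lemma key_identity (hwm : Measurable w) (hw : Integrable w) (hw0 : ∀ t, 0 ≤ w t) :
    ∀ (n : ℕ) (x : ℝ), ∫ t in Set.Ioi x, w t * (∫ s in Set.Ioi t, w s) ^ n
      = (∫ t in Set.Ioi x, w t) ^ (n + 1) / (n + 1) := by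
  intro n
  induction n with
  | zero => intro x; simp
  | succ n ih =>
    intro x
    set F : ℝ → ℝ := fun t => ∫ s in Set.Ioi t, w s with hF
    set g : ℝ → ℝ := fun t => w t * F t ^ n with hg
    have hgint : Integrable g := g_int hwm hw hw0 n
    set A : Set (ℝ × ℝ) := {p | x < p.1 ∧ p.1 < p.2} with hA
    have hAm : MeasurableSet A :=
      (measurableSet_lt measurable_const measurable_fst).inter
        (measurableSet_lt measurable_fst measurable_snd)
    have hint : Integrable (A.indicator fun p : ℝ × ℝ => g p.1 * w p.2)
        ((volume : Measure ℝ).prod volume) := (hgint.mul_prod hw).indicator hAm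
    have swap := MeasureTheory.integral_integral_swap
      (f := fun t s => A.indicator (fun p : ℝ × ℝ => g p.1 * w p.2) (t, s)) hint
    -- LHS of swap
    have inner1 : ∀ t, (∫ s, A.indicator (fun p : ℝ × ℝ => g p.1 * w p.2) (t, s))
        = (Set.Ioi x).indicator (fun t => g t * F t) t := by
      intro t
      by_cases ht : x < t
      · have heq : (fun s => A.indicator (fun p : ℝ × ℝ => g p.1 * w p.2) (t, s))
            = (Set.Ioi t).indicator (fun s => g t * w s) := by
          funext s
          by_cases hs : t < s <;> simp [A, Set.indicator, ht, hs]
        rw [heq, integral_indicator measurableSet_Ioi, Set.indicator_of_mem (Set.mem_Ioi.mpr ht),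
          integral_const_mul]
      · have heq : (fun s => A.indicator (fun p : ℝ × ℝ => g p.1 * w p.2) (t, s))
            = fun _ => 0 := by
          funext s
          exact Set.indicator_of_notMem (fun hmem => ht hmem.1) _
        rw [heq, integral_zero, Set.indicator_of_notMem (by simpa using ht)]
    have inner2 : ∀ s, (∫ t, A.indicator (fun p : ℝ × ℝ => g p.1 * w p.2) (t, s))
        = (Set.Ioi x).indicator (fun s => (∫ t in Set.Ioo x s, g t) * w s) s := by
      intro s
      by_cases hs : x < s
      · have heq : (fun t => A.indicator (fun p : ℝ × ℝ => g p.1 * w p.2) (t, s))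
            = (Set.Ioo x s).indicator (fun t => g t * w s) := by
          funext t
          by_cases ht1 : x < t
          · by_cases ht2 : t < s <;>
              simp [A, Set.indicator, ht1, ht2, Set.mem_Ioo]
          · simp [A, Set.indicator, ht1, Set.mem_Ioo]
        rw [heq, integral_indicator measurableSet_Ioo, Set.indicator_of_mem (Set.mem_Ioi.mpr hs),
          integral_mul_const]
      · have heq : (fun t => A.indicator (fun p : ℝ × ℝ => g p.1 * w p.2) (t, s))
            = fun _ => 0 := by
          funext t
          refine Set.indicator_of_notMem (fun hmem => hs ?_) _
          exact lt_trans hmem.1 hmem.2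
        rw [heq, integral_zero, Set.indicator_of_notMem (by simpa using hs)]
    rw [funext inner1] at swap
    -- rewrite the other side
    have swap2 : ∫ t in Set.Ioi x, g t * F t
        = ∫ s in Set.Ioi x, (∫ t in Set.Ioo x s, g t) * w s := by
      rw [← integral_indicator measurableSet_Ioi, swap, ← integral_indicator measurableSet_Ioi]
      exact integral_congr_ae (ae_of_all _ inner2)
    -- evaluate the inner Ioo-integral using the induction hypothesis
    have hIoo : ∀ s ∈ Set.Ioi x, (∫ t in Set.Ioo x s, g t) * w s
        = ((F x ^ (n+1) - F s ^ (n+1)) / (n+1)) * w s := by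
      intro s hs
      have hsplit : ∫ t in Set.Ioi x, g t = (∫ t in Set.Ioo x s, g t) + ∫ t in Set.Ici s, g t := by
        rw [← setIntegral_union ((Set.Iio_disjoint_Ici le_rfl).mono_left Set.Ioo_subset_Iio_self) measurableSet_Ici
          hgint.integrableOn hgint.integrableOn, Set.Ioo_union_Ici_eq_Ioi hs]
      have h1 : ∫ t in Set.Ici s, g t = ∫ t in Set.Ioi s, g t := integral_Ici_eq_integral_Ioi
      have h2 := ih s
      have h3 := ih x
      rw [h1, h2] at hsplit
      rw [h3] at hsplit
      have : (∫ t in Set.Ioo x s, g t) = (F x ^ (n+1) - F s ^ (n+1)) / (n+1) := by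
        field_simp at hsplit ⊢
        linarith
      rw [this]
    rw [setIntegral_congr_fun measurableSet_Ioi hIoo] at swap2
    -- now compute
    have hintF : Integrable (fun s => w s * F s ^ (n+1)) := g_int hwm hw hw0 (n+1)
    have expand : ∀ s, ((F x ^ (n+1) - F s ^ (n+1)) / (n+1)) * w s
        = (F x ^ (n+1) / (n+1)) * w s - (1/(n+1)) * (w s * F s ^ (n+1)) := by
      intro s; ring
    rw [setIntegral_congr_fun measurableSet_Ioi (fun s _ => expand s)] at swap2
    rw [integral_sub ((hw.const_mul _).integrableOn) ((hintF.const_mul _).integrableOn),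
      integral_const_mul, integral_const_mul] at swap2
    have htarget : ∫ t in Set.Ioi x, w t * F t ^ (n+1) = ∫ t in Set.Ioi x, g t * F t := by
      refine setIntegral_congr_fun measurableSet_Ioi (fun t _ => ?_)
      simp only [g]; ring
    have hTeq := htarget.trans swap2
    have hFx : (∫ t in Set.Ioi x, w t) = F x := rfl
    rw [hFx] at hTeq ⊢
    set T := ∫ t in Set.Ioi x, w t * F t ^ (n+1) with hT
    have hne1 : ((n : ℝ) + 1) ≠ 0 := by positivity
    have hne2 : ((n : ℝ) + 1 + 1) ≠ 0 := by positivity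
    have hkey : T * ((n : ℝ) + 1 + 1) = F x ^ (n + 2) := by
      field_simp at hTeq
      linear_combination hTeq
    push_cast
    rw [eq_div_iff hne2, hkey]

end keylemma

section Dbound

lemma D_norm_le {lam : ℂ} (him : 0 ≤ lam.im) (hne : lam ≠ 0) (y : ℝ) :
    ‖D lam y‖ ≤ 1 / ‖lam‖ := by
  have hpos : 0 < ‖lam‖ := norm_pos_iff.mpr hne
  unfold D
  split_ifs with hy
  · have hre : (2 * Complex.I * lam * (y : ℂ)).re = -2 * lam.im * y := by
      simp [Complex.mul_re, Complex.mul_im]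
    have hexp : ‖Complex.exp (2 * Complex.I * lam * (y : ℂ))‖ ≤ 1 := by
      rw [Complex.norm_exp, hre]
      rw [Real.exp_le_one_iff]
      have : 0 ≤ 2 * lam.im * y := by positivity
      linarith
    have hnum : ‖Complex.exp (2 * Complex.I * lam * (y : ℂ)) - 1‖ ≤ 2 := by
      calc ‖Complex.exp (2 * Complex.I * lam * (y : ℂ)) - 1‖
          ≤ ‖Complex.exp (2 * Complex.I * lam * (y : ℂ))‖ + ‖(1 : ℂ)‖ := norm_sub_le _ _
        _ ≤ 1 + 1 := by rw [norm_one]; linarith [hexp]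
        _ = 2 := by norm_num
    have hden : ‖2 * Complex.I * lam‖ = 2 * ‖lam‖ := by
      simp [norm_mul]
    rw [norm_div, hden]
    rw [div_le_div_iff₀ (by positivity) (by positivity)]
    calc ‖Complex.exp (2 * Complex.I * lam * (y:ℂ)) - 1‖ * ‖lam‖
        ≤ 2 * ‖lam‖ := by
          exact mul_le_mul_of_nonneg_right hnum (le_of_lt hpos)
      _ = 1 * (2 * ‖lam‖) := by ring
  · rw [norm_zero]
    positivity

end Dbound

lemma D_measurable (lam : ℂ) : Measurable (D lam) := by
  unfold D
  refine Measurable.ite (measurableSet_lt measurable_const measurable_id) ?_ measurable_const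
  fun_prop

lemma Phi_measurable (q : ℝ → ℂ) (hq : Measurable q) (lam : ℂ) (g : ℝ → ℂ)
    (hg : Measurable g) : Measurable (Phi q lam g) := by
  have h1 : Phi q lam g = fun y => ∫ t, ({p : ℝ × ℝ | p.1 < p.2}.indicator
      (fun p => D lam (p.2 - p.1) * q p.2 * g p.2)) (y, t) := by
    funext y
    unfold Phi
    rw [← integral_indicator measurableSet_Ioi]
    refine integral_congr_ae (Filter.Eventually.of_forall fun t => ?_)
    by_cases h : y < t <;> simp [Set.indicator, Set.mem_Ioi, h]
  rw [h1]
  have hm : StronglyMeasurable ({p : ℝ × ℝ | p.1 < p.2}.indicator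
      (fun p : ℝ × ℝ => D lam (p.2 - p.1) * q p.2 * g p.2)) := by
    apply Measurable.stronglyMeasurable
    exact Measurable.indicator
      ((((D_measurable lam).comp (measurable_snd.sub measurable_fst)).mul
        (hq.comp measurable_snd)).mul (hg.comp measurable_snd))
      (measurableSet_lt measurable_fst measurable_snd)
  exact (hm.integral_prod_right').measurable

theorem iterate_Phi_bound (q : ℝ → ℂ) (hq : Integrable q)
    (lam : ℂ) (him : 0 ≤ lam.im) (hne : lam ≠ 0)
    (f : ℝ → ℂ) (hf : Measurable f) (C : ℝ) (hC : ∀ x, ‖f x‖ ≤ C)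
    (n : ℕ) (x : ℝ) :
    ‖(Phi q lam)^[n] f x‖ ≤ ((∫ t, ‖q t‖) / ‖lam‖) ^ n / n.factorial * C := by
  have hC0 : 0 ≤ C := le_trans (norm_nonneg _) (hC 0)
  have hpos : 0 < ‖lam‖ := norm_pos_iff.mpr hne
  obtain ⟨q', hq'sm, hq'ae⟩ := hq.1
  have hq'm : Measurable q' := hq'sm.measurable
  have hq'int : Integrable q' := hq.congr hq'ae
  have hPhi : Phi q lam = Phi q' lam := by
    funext g y
    unfold Phi
    refine integral_congr_ae ?_
    filter_upwards [ae_restrict_of_ae hq'ae] with t ht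
    rw [ht]
  have hnorm : (∫ t, ‖q t‖) = ∫ t, ‖q' t‖ :=
    integral_congr_ae (hq'ae.mono fun t ht => by simp only [ht])
  rw [hPhi, hnorm]
  set w : ℝ → ℝ := fun t => ‖q' t‖ with hwdef
  have hwm : Measurable w := hq'm.norm
  have hwi : Integrable w := hq'int.norm
  have hw0 : ∀ t, 0 ≤ w t := fun t => norm_nonneg _
  have hF0 : ∀ t, 0 ≤ ∫ s in Set.Ioi t, w s := F_nonneg hw0
  have hFle : ∀ t, (∫ s in Set.Ioi t, w s) ≤ ∫ s, w s := F_le hwi hw0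
  have main : ∀ m, Measurable ((Phi q' lam)^[m] f) ∧
      ∀ y, ‖(Phi q' lam)^[m] f y‖
        ≤ (∫ s in Set.Ioi y, w s) ^ m / (‖lam‖ ^ m * m.factorial) * C := by
    intro m
    induction m with
    | zero => exact ⟨hf, fun y => by simpa using hC y⟩
    | succ m ih =>
      obtain ⟨hgm, hgb⟩ := ih
      set g := (Phi q' lam)^[m] f with hgdef
      have hm : Measurable ((Phi q' lam)^[m+1] f) := by
        rw [Function.iterate_succ_apply']
        exact Phi_measurable q' hq'm lam g hgm
      refine ⟨hm, fun y => ?_⟩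
      rw [Function.iterate_succ_apply']
      have hfacpos : (0:ℝ) < m.factorial := by
        exact_mod_cast Nat.factorial_pos m
      have hbound : ∀ t, ‖D lam (t - y) * q' t * g t‖
          ≤ (C / (‖lam‖ ^ (m+1) * m.factorial))
            * (w t * (∫ s in Set.Ioi t, w s) ^ m) := by
        intro t
        rw [norm_mul, norm_mul]
        calc ‖D lam (t - y)‖ * ‖q' t‖ * ‖g t‖
            ≤ (1 / ‖lam‖) * w t
              * ((∫ s in Set.Ioi t, w s) ^ m / (‖lam‖ ^ m * m.factorial) * C) := by
              refine mul_le_mul (mul_le_mul_of_nonneg_right (D_norm_le him hne _) (hw0 t))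
                (hgb t) (norm_nonneg _) (mul_nonneg (by positivity) (hw0 t))
          _ = (C / (‖lam‖ ^ (m+1) * m.factorial))
              * (w t * (∫ s in Set.Ioi t, w s) ^ m) := by
              field_simp
              ring
      have hdom : Integrable (fun t => (C / (‖lam‖ ^ (m+1) * m.factorial))
          * (w t * (∫ s in Set.Ioi t, w s) ^ m)) := (g_int hwm hwi hw0 m).const_mul _
      have hle := norm_integral_le_of_norm_le (μ := volume.restrict (Set.Ioi y))
        hdom.integrableOn (ae_of_all _ fun t => hbound t)
      show ‖∫ t in Set.Ioi y, D lam (t - y) * q' t * g t‖ ≤ _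
      refine le_trans hle (le_of_eq ?_)
      rw [integral_const_mul, key_identity hwm hwi hw0 m y, Nat.factorial_succ]
      push_cast
      field_simp
  refine le_trans ((main n).2 x) ?_
  rw [div_pow, div_div]
  gcongr <;> first
    | exact hF0 x
    | exact hFle x
    | exact ae_of_all _ hw0
    | exact Measure.restrict_le_self
end

section
/- Let q ∈ L¹(ℝ) be complex-valued and λ ∈ ℂ with Im λ ≥ 0 and λ ≠ 0. Then there exists a bounded continuous function m : ℝ → ℂ satisfying the Jost integral equation m(x) = 1 + ∫_x^∞ D(t−x,λ) q(t) m(t) dt for all x ∈ ℝ, this solution is unique among essentially bounded measurable solutions (any two agree almost everywhere), and it satisfies sup_{x∈ℝ} |m(x)| ≤ exp(‖q‖_{L¹}/|λ|). -/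
open MeasureTheory

noncomputable def Qi (f : ℝ → ℝ) (x : ℝ) : ℝ := ∫ t in Set.Ioi x, f t

variable {f w : ℝ → ℝ}

lemma Qi_anti (hf : Integrable f) (hf0 : ∀ t, 0 ≤ f t) : Antitone (Qi f) := by
  intro a b hab
  exact setIntegral_mono_set hf.integrableOn (ae_of_all _ hf0)
    ((Set.Ioi_subset_Ioi hab).eventuallyLE)

lemma Qi_nonneg (hf0 : ∀ t, 0 ≤ f t) (x : ℝ) : 0 ≤ Qi f x :=
  setIntegral_nonneg measurableSet_Ioi (fun t _ => hf0 t)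

lemma Qi_le_total (hf : Integrable f) (hf0 : ∀ t, 0 ≤ f t) (x : ℝ) : Qi f x ≤ ∫ t, f t :=
  setIntegral_le_integral hf (ae_of_all _ hf0)

lemma Qi_meas (hf : Integrable f) (hf0 : ∀ t, 0 ≤ f t) : Measurable (Qi f) :=
  (Qi_anti hf hf0).measurable

lemma Qi_diff (hf : Integrable f) {x s : ℝ} (hxs : x < s) :
    ∫ t in Set.Ioo x s, f t = Qi f x - Qi f s := by
  have hu : Set.Ioo x s ∪ Set.Ici s = Set.Ioi x := Set.Ioo_union_Ici_eq_Ioi hxs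
  have hd : Disjoint (Set.Ioo x s) (Set.Ici s) :=
    Set.disjoint_left.mpr (fun t ht hts => absurd hts (not_le.mpr ht.2))
  have := setIntegral_union hd measurableSet_Ici hf.integrableOn hf.integrableOn (f := f) (μ := volume)
  rw [hu] at this
  have h2 : ∫ t in Set.Ici s, f t = Qi f s := integral_Ici_eq_integral_Ioi
  rw [Qi, this, h2, Qi]; ring

lemma swap_int (hf : Integrable f) (hw : Integrable w) (x : ℝ) :
    ∫ t in Set.Ioi x, (∫ s in Set.Ioi t, w s) * f t
      = ∫ s in Set.Ioi x, (∫ t in Set.Ioo x s, f t) * w s := by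
  set S : Set (ℝ × ℝ) := {p | x < p.1 ∧ p.1 < p.2} with hSdef
  have hS : MeasurableSet S :=
    (measurableSet_lt measurable_const measurable_fst).inter
      (measurableSet_lt measurable_fst measurable_snd)
  set G : ℝ × ℝ → ℝ := S.indicator (fun p => f p.1 * w p.2) with hGdef
  have hG : Integrable G (volume.prod volume) := (hf.mul_prod hw).indicator hS
  have h1 : ∀ t, (∫ s, G (t, s)) =
      (Set.Ioi x).indicator (fun t => (∫ s in Set.Ioi t, w s) * f t) t := by
    intro t
    by_cases hx : x < t
    · have he : (fun s => G (t, s)) = (Set.Ioi t).indicator (fun s => f t * w s) := by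
        funext s
        by_cases hts : t < s
        · simp [hGdef, hSdef, Set.indicator, hx, hts]
        · simp [hGdef, hSdef, Set.indicator, hx, hts]
      rw [he, integral_indicator measurableSet_Ioi, integral_const_mul,
        Set.indicator_of_mem (Set.mem_Ioi.mpr hx), mul_comm]
    · have he : (fun s => G (t, s)) = fun _ => 0 := by
        funext s; simp [hGdef, hSdef, Set.indicator, hx]
      rw [he, integral_zero]; simp [Set.indicator, hx]
  have h2 : ∀ s, (∫ t, G (t, s)) = (∫ t in Set.Ioo x s, f t) * w s := by
    intro s
    have he : (fun t => G (t, s)) = (Set.Ioo x s).indicator (fun t => f t * w s) := by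
      funext t
      by_cases h1' : x < t <;> by_cases h2' : t < s <;>
        simp [hGdef, hSdef, Set.indicator, h1', h2', Set.mem_Ioo]
    rw [he, integral_indicator measurableSet_Ioo, integral_mul_const]
  have hswap : (∫ t, ∫ s, G (t, s)) = ∫ s, ∫ t, G (t, s) := by
    apply integral_integral_swap
    exact hG.congr (ae_of_all _ (fun p => rfl))
  calc ∫ t in Set.Ioi x, (∫ s in Set.Ioi t, w s) * f t
      = ∫ t, (Set.Ioi x).indicator (fun t => (∫ s in Set.Ioi t, w s) * f t) t :=
        (integral_indicator measurableSet_Ioi).symm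
    _ = ∫ t, ∫ s, G (t, s) := by simp_rw [h1]
    _ = ∫ s, ∫ t, G (t, s) := hswap
    _ = ∫ s, (∫ t in Set.Ioo x s, f t) * w s := by simp_rw [h2]
    _ = ∫ s in Set.Ioi x, (∫ t in Set.Ioo x s, f t) * w s := by
        refine (setIntegral_eq_integral_of_forall_compl_eq_zero fun s hs => ?_).symm
        have he : Set.Ioo x s = ∅ := Set.Ioo_eq_empty (by simpa using hs)
        rw [he]; simp

lemma Qi_pow_mul_integrable (hf : Integrable f) (hf0 : ∀ t, 0 ≤ f t) (n : ℕ) :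
    Integrable (fun s => Qi f s ^ n * f s) := by
  refine hf.bdd_mul (c := (∫ t, f t) ^ n) ((Qi_meas hf hf0).pow_const n).aestronglyMeasurable
    (ae_of_all _ fun s => ?_)
  rw [Real.norm_eq_abs, abs_of_nonneg (pow_nonneg (Qi_nonneg hf0 s) n)]
  exact pow_le_pow_left₀ (Qi_nonneg hf0 s) (Qi_le_total hf hf0 s) n

lemma Qi_key (hf : Integrable f) (hf0 : ∀ t, 0 ≤ f t) (n : ℕ) (x : ℝ) :
    ∫ t in Set.Ioi x, Qi f t ^ n * f t = Qi f x ^ (n + 1) / (n + 1) := by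
  induction n generalizing x with
  | zero => simp [Qi]
  | succ n ih =>
    set w : ℝ → ℝ := fun s => Qi f s ^ n * f s with hwdef
    have hw : Integrable w := Qi_pow_mul_integrable hf hf0 n
    have hN : ((n : ℝ) + 1) ≠ 0 := by positivity
    have hrw : ∀ t, Qi f t ^ (n + 1) * f t = (((n : ℝ) + 1) * ∫ s in Set.Ioi t, w s) * f t := by
      intro t
      rw [ih t]
      congr 1
      field_simp
    have step1 : ∫ t in Set.Ioi x, Qi f t ^ (n + 1) * f t
        = ((n : ℝ) + 1) * ∫ t in Set.Ioi x, (∫ s in Set.Ioi t, w s) * f t := by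
      simp_rw [hrw, mul_assoc]
      exact integral_const_mul _ _
    have step2 : ∫ t in Set.Ioi x, (∫ s in Set.Ioi t, w s) * f t
        = ∫ s in Set.Ioi x, (Qi f x - Qi f s) * w s := by
      rw [swap_int hf hw x]
      refine setIntegral_congr_fun measurableSet_Ioi (fun s hs => ?_)
      rw [Qi_diff hf (Set.mem_Ioi.mp hs)]
    have hQw : Integrable (fun s => Qi f s * w s) := by
      have : (fun s => Qi f s * w s) = fun s => Qi f s ^ (n + 1) * f s := by
        funext s; rw [hwdef]; ring
      rw [this]; exact Qi_pow_mul_integrable hf hf0 (n + 1)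
    have step3 : ∫ s in Set.Ioi x, (Qi f x - Qi f s) * w s
        = Qi f x * (Qi f x ^ (n + 1) / (n + 1)) - ∫ s in Set.Ioi x, Qi f s ^ (n + 1) * f s := by
      simp_rw [sub_mul]
      rw [integral_sub (hw.integrableOn.const_mul _) hQw.integrableOn,
        integral_const_mul, ih x]
      congr 1
      refine setIntegral_congr_fun measurableSet_Ioi (fun s _ => ?_)
      rw [hwdef]; ring
    have hEq : (∫ s in Set.Ioi x, Qi f s ^ (n + 1) * f s)
        = ((n : ℝ) + 1) * (Qi f x * (Qi f x ^ (n + 1) / ((n : ℝ) + 1))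
            - ∫ s in Set.Ioi x, Qi f s ^ (n + 1) * f s) := by
      conv_lhs => rw [step1, step2, step3]
    set L := ∫ s in Set.Ioi x, Qi f s ^ (n + 1) * f s with hL
    have h1 : ((n : ℝ) + 1) * (Qi f x * (Qi f x ^ (n + 1) / ((n : ℝ) + 1)))
        = Qi f x ^ (n + 2) := by
      field_simp
      ring
    rw [mul_sub, h1] at hEq
    have hcast : ((↑(n + 1) : ℝ) + 1) = (n : ℝ) + 2 := by push_cast; ring
    have hgoal : L = Qi f x ^ (n + 2) / ((n : ℝ) + 2) := by
      rw [eq_div_iff (by positivity)]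
      linarith [hEq]
    rw [show n + 1 + 1 = n + 2 from rfl, hcast]
    exact hgoal

lemma D_bound (lam : ℂ) (him : 0 ≤ lam.im) (y : ℝ) : ‖D lam y‖ ≤ (‖lam‖)⁻¹ := by
  have ha : 0 < ‖lam‖ ∨ ‖lam‖ = 0 := by
    rcases eq_or_ne lam 0 with h | h
    · right; simp [h]
    · left; exact norm_pos_iff.mpr h
  unfold D
  split_ifs with hy
  · rcases ha with ha | ha
    · rw [norm_div]
      have h2 : ‖2 * Complex.I * lam‖ = 2 * ‖lam‖ := by
        simp [norm_mul]
      have hre : (2 * Complex.I * lam * (y : ℂ)).re = -(2 * y * lam.im) := by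
        simp [Complex.mul_re, Complex.mul_im]
        ring
      have hexp : ‖Complex.exp (2 * Complex.I * lam * (y : ℂ)) - 1‖ ≤ 2 := by
        calc ‖Complex.exp (2 * Complex.I * lam * (y : ℂ)) - 1‖
            ≤ ‖Complex.exp (2 * Complex.I * lam * (y : ℂ))‖ + ‖(1 : ℂ)‖ := norm_sub_le _ _
          _ ≤ 1 + 1 := by
              gcongr
              · rw [Complex.norm_exp, hre]
                exact Real.exp_le_one_iff.mpr (by nlinarith)
              · simp
          _ = 2 := by norm_num
      rw [h2]
      calc ‖Complex.exp (2 * Complex.I * lam * (y : ℂ)) - 1‖ / (2 * ‖lam‖)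
          ≤ 2 / (2 * ‖lam‖) := by gcongr
        _ = (‖lam‖)⁻¹ := by field_simp
    · have : lam = 0 := by
        simpa using norm_eq_zero.mp ha
      simp [this, ha]
  · rw [norm_zero]
    positivity

lemma D_cont (lam : ℂ) : Continuous (D lam) := by
  have h : (D lam) = fun y : ℝ =>
      (Complex.exp (2 * Complex.I * lam * (max y 0 : ℝ)) - 1) / (2 * Complex.I * lam) := by
    funext y
    unfold D
    split_ifs with hy
    · rw [max_eq_left hy.le]
    · rw [max_eq_right (not_lt.mp hy)]
      simp
  rw [h]
  fun_prop

lemma D_zero_of_nonpos (lam : ℂ) {y : ℝ} (hy : y ≤ 0) : D lam y = 0 := by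
  unfold D; rw [if_neg (not_lt.mpr hy)]

noncomputable def jostIter (q : ℝ → ℂ) (lam : ℂ) : ℕ → ℝ → ℂ
  | 0 => fun _ => 1
  | n + 1 => fun x => ∫ t in Set.Ioi x, D lam (t - x) * q t * jostIter q lam n t

lemma jostIter_main (q : ℝ → ℂ) (hq : Integrable q) (lam : ℂ) (him : 0 ≤ lam.im)
    (hne : lam ≠ 0) (n : ℕ) :
    Continuous (jostIter q lam n) ∧
    ∀ x, ‖jostIter q lam n x‖ ≤
      ((‖lam‖)⁻¹ * Qi (fun t => ‖q t‖) x) ^ n / n.factorial := by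
  set f : ℝ → ℝ := fun t => ‖q t‖ with hfdef
  have hf : Integrable f := hq.norm
  have hf0 : ∀ t, 0 ≤ f t := fun t => norm_nonneg _
  set k : ℝ := (‖lam‖)⁻¹ with hkdef
  have hk : 0 < k := inv_pos.mpr (norm_pos_iff.mpr hne)
  set A : ℝ := ∫ t, f t with hAdef
  have hA0 : 0 ≤ A := integral_nonneg hf0
  induction n with
  | zero => exact ⟨continuous_const, fun x => by simp [jostIter]⟩
  | succ n ih =>
    obtain ⟨hc, hb⟩ := ih
    set Bn : ℝ := (k * A) ^ n / n.factorial with hBdef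
    have hBn0 : 0 ≤ Bn := by positivity
    have hMb : ∀ t, ‖jostIter q lam n t‖ ≤ Bn := by
      intro t
      refine (hb t).trans ?_
      rw [hBdef]
      gcongr
      · exact mul_nonneg hk.le (Qi_nonneg hf0 t)
      · exact Qi_le_total hf hf0 t
    set g : ℝ → ℝ → ℂ := fun x t => D lam (t - x) * q t * jostIter q lam n t with hgdef
    have hmeas : ∀ x, AEStronglyMeasurable (g x) volume := fun x =>
      ((((D_cont lam).comp (continuous_id.sub continuous_const)).aestronglyMeasurable.mul
        hq.1).mul hc.aestronglyMeasurable)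
    have hgbound : ∀ x t, ‖g x t‖ ≤ k * ((k * Qi f t) ^ n / n.factorial) * f t := by
      intro x t
      have h1 : ‖g x t‖ = ‖D lam (t - x)‖ * ‖q t‖ * ‖jostIter q lam n t‖ := by
        rw [hgdef]; simp [norm_mul]
      rw [h1]
      have hD := D_bound lam him (t - x)
      have hM := hb t
      calc ‖D lam (t - x)‖ * ‖q t‖ * ‖jostIter q lam n t‖
          ≤ k * ‖q t‖ * ((k * Qi f t) ^ n / n.factorial) := by
            apply mul_le_mul (mul_le_mul_of_nonneg_right hD (norm_nonneg _)) hM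
              (norm_nonneg _) (by positivity)
        _ = k * ((k * Qi f t) ^ n / n.factorial) * f t := by rw [hfdef]; ring
    have hgboundA : ∀ x t, ‖g x t‖ ≤ (k * Bn) * f t := by
      intro x t
      refine (hgbound x t).trans ?_
      have hle1 : (k * Qi f t) ^ n / n.factorial ≤ Bn := by
        rw [hBdef]
        gcongr
        · exact mul_nonneg hk.le (Qi_nonneg hf0 t)
        · exact Qi_le_total hf hf0 t
      exact mul_le_mul_of_nonneg_right
        (mul_le_mul_of_nonneg_left hle1 hk.le) (hf0 t)
    have hzero : ∀ x, ∀ t ∉ Set.Ioi x, g x t = 0 := by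
      intro x t ht
      rw [hgdef]
      simp only
      rw [D_zero_of_nonpos lam (sub_nonpos.mpr (not_lt.mp fun h => ht h))]
      simp
    have heq : jostIter q lam (n + 1) = fun x => ∫ t, g x t := by
      funext x
      show (∫ t in Set.Ioi x, D lam (t - x) * q t * jostIter q lam n t) = _
      exact setIntegral_eq_integral_of_forall_compl_eq_zero (hzero x)
    constructor
    · rw [heq]
      refine continuous_of_dominated hmeas (fun x => ae_of_all _ (hgboundA x))
        (hf.const_mul _) (ae_of_all _ fun t => ?_)
      exact (((D_cont lam).comp (continuous_const.sub continuous_id)).mul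
        continuous_const).mul continuous_const
    · intro x
      have hInt : IntegrableOn (fun t => (k ^ (n + 1) / n.factorial) * (Qi f t ^ n * f t))
          (Set.Ioi x) := ((Qi_pow_mul_integrable hf hf0 n).const_mul _).integrableOn
      have hle : ‖jostIter q lam (n + 1) x‖
          ≤ ∫ t in Set.Ioi x, (k ^ (n + 1) / n.factorial) * (Qi f t ^ n * f t) := by
        show ‖∫ t in Set.Ioi x, D lam (t - x) * q t * jostIter q lam n t‖ ≤ _
        refine norm_integral_le_of_norm_le hInt (ae_of_all _ fun t => ?_)
        refine (hgbound x t).trans (le_of_eq ?_)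
        rw [mul_pow]
        ring
      refine hle.trans (le_of_eq ?_)
      rw [integral_const_mul, Qi_key hf hf0 n x, mul_pow, Nat.factorial_succ]
      push_cast
      rw [div_mul_div_comm]
      ring

lemma exp_tsum_div (x : ℝ) : ∑' n : ℕ, x ^ n / n.factorial = Real.exp x := by
  rw [Real.exp_eq_exp_ℝ, NormedSpace.exp_eq_tsum_div]

theorem jost_equation_solution (q : ℝ → ℂ) (hq : Integrable q)
    (lam : ℂ) (him : 0 ≤ lam.im) (hne : lam ≠ 0) :
    (∃ m : ℝ → ℂ, Continuous m ∧
      (∀ x, m x = 1 + ∫ t in Set.Ioi x, D lam (t - x) * q t * m t) ∧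
      (∀ x, ‖m x‖ ≤ Real.exp ((∫ t, ‖q t‖) / ‖lam‖))) ∧
    (∀ m₁ m₂ : ℝ → ℂ, Measurable m₁ → Measurable m₂ →
      (∃ C₁, ∀ᵐ x ∂(volume : Measure ℝ), ‖m₁ x‖ ≤ C₁) →
      (∃ C₂, ∀ᵐ x ∂(volume : Measure ℝ), ‖m₂ x‖ ≤ C₂) →
      (∀ x, m₁ x = 1 + ∫ t in Set.Ioi x, D lam (t - x) * q t * m₁ t) →
      (∀ x, m₂ x = 1 + ∫ t in Set.Ioi x, D lam (t - x) * q t * m₂ t) →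
      m₁ =ᵐ[(volume : Measure ℝ)] m₂) := by
  have hDmeas : ∀ x : ℝ, Continuous (fun t : ℝ => D lam (t - x)) := fun x =>
    (D_cont lam).comp (continuous_id.sub continuous_const)
  set f : ℝ → ℝ := fun t => ‖q t‖ with hfdef
  have hf : Integrable f := hq.norm
  have hf0 : ∀ t, 0 ≤ f t := fun t => norm_nonneg _
  set k : ℝ := (‖lam‖)⁻¹ with hkdef
  have hk : 0 < k := inv_pos.mpr (norm_pos_iff.mpr hne)
  set A : ℝ := ∫ t, f t with hAdef
  have hA0 : 0 ≤ A := integral_nonneg hf0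
  have hQle : ∀ x, Qi f x ≤ A := Qi_le_total hf hf0
  have hQ0 : ∀ x, 0 ≤ Qi f x := Qi_nonneg hf0
  have hmain := jostIter_main q hq lam him hne
  set u : ℕ → ℝ := fun n => (k * A) ^ n / n.factorial with hudef
  have hu : Summable u := Real.summable_pow_div_factorial (k * A)
  have hu0 : ∀ n, 0 ≤ u n := fun n => by positivity
  have hub : ∀ n x, ‖jostIter q lam n x‖ ≤ u n := by
    intro n x
    have h := (hmain n).2 x
    rw [← hkdef, ← hfdef] at h
    refine h.trans ?_
    simp only [hudef]
    gcongr
    · exact mul_nonneg hk.le (hQ0 x)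
    · exact hQle x
  set m : ℝ → ℂ := fun x => ∑' n, jostIter q lam n x with hmdef
  have hmcont : Continuous m := continuous_tsum (fun n => (hmain n).1) hu hub
  have hmsum : ∀ x, Summable (fun n => jostIter q lam n x) := fun x =>
    Summable.of_norm_bounded hu (fun n => hub n x)
  have hmb : ∀ x, ‖m x‖ ≤ Real.exp (A * k) := by
    intro x
    have hns : Summable (fun n => ‖jostIter q lam n x‖) :=
      Summable.of_nonneg_of_le (fun n => norm_nonneg _) (fun n => hub n x) hu
    calc ‖m x‖ ≤ ∑' n, ‖jostIter q lam n x‖ := norm_tsum_le_tsum_norm hns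
      _ ≤ ∑' n, u n := Summable.tsum_le_tsum (fun n => hub n x) hns hu
      _ = Real.exp (k * A) := exp_tsum_div (k * A)
      _ = Real.exp (A * k) := by rw [mul_comm]
  -- the equation
  have hterm_meas : ∀ (n : ℕ) (x : ℝ),
      AEStronglyMeasurable (fun t => D lam (t - x) * q t * jostIter q lam n t) volume :=
    fun n x => ((hDmeas x).aestronglyMeasurable.mul hq.1).mul (hmain n).1.aestronglyMeasurable
  have hterm_bound : ∀ (n : ℕ) (x t : ℝ),
      ‖D lam (t - x) * q t * jostIter q lam n t‖ ≤ (k * u n) * f t := by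
    intro n x t
    calc ‖D lam (t - x) * q t * jostIter q lam n t‖
        = ‖D lam (t - x)‖ * ‖q t‖ * ‖jostIter q lam n t‖ := by simp [norm_mul]
      _ ≤ k * ‖q t‖ * u n := by
          apply mul_le_mul (mul_le_mul_of_nonneg_right (D_bound lam him (t - x))
            (norm_nonneg _)) (hub n t) (norm_nonneg _) (by positivity)
      _ = (k * u n) * f t := by rw [hfdef]; ring
  have hterm_int : ∀ (n : ℕ) (x : ℝ),
      Integrable (fun t => D lam (t - x) * q t * jostIter q lam n t)
        (volume.restrict (Set.Ioi x)) := by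
    intro n x
    refine Integrable.mono' ((hf.const_mul (k * u n)).restrict)
      ((hterm_meas n x).restrict) (ae_of_all _ fun t => hterm_bound n x t)
  have hterm_norm_int : ∀ (n : ℕ) (x : ℝ),
      (∫ t in Set.Ioi x, ‖D lam (t - x) * q t * jostIter q lam n t‖) ≤ (k * u n) * A := by
    intro n x
    calc (∫ t in Set.Ioi x, ‖D lam (t - x) * q t * jostIter q lam n t‖)
        ≤ ∫ t in Set.Ioi x, (k * u n) * f t := by
          refine integral_mono_of_nonneg (ae_of_all _ fun t => norm_nonneg _)
            ((hf.const_mul (k * u n)).restrict) (ae_of_all _ fun t => hterm_bound n x t)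
      _ = (k * u n) * Qi f x := by rw [integral_const_mul]; rfl
      _ ≤ (k * u n) * A := by
          refine mul_le_mul_of_nonneg_left (hQle x) (by positivity)
  have hmeq : ∀ x, m x = 1 + ∫ t in Set.Ioi x, D lam (t - x) * q t * m t := by
    intro x
    have hsummable : Summable (fun n => ∫ t in Set.Ioi x,
        ‖D lam (t - x) * q t * jostIter q lam n t‖) := by
      refine Summable.of_nonneg_of_le
        (fun n => integral_nonneg (fun t => norm_nonneg _))
        (fun n => hterm_norm_int n x) ?_
      simpa [mul_comm, mul_assoc, mul_left_comm] using (hu.mul_left (k * A))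
    have hswap : (∑' n, ∫ t in Set.Ioi x, D lam (t - x) * q t * jostIter q lam n t)
        = ∫ t in Set.Ioi x, ∑' n, D lam (t - x) * q t * jostIter q lam n t :=
      integral_tsum_of_summable_integral_norm (fun n => hterm_int n x) hsummable
    have hsum_int : ∀ t, (∑' n, D lam (t - x) * q t * jostIter q lam n t)
        = D lam (t - x) * q t * m t := by
      intro t
      rw [hmdef]
      simp only [mul_assoc]
      rw [tsum_mul_left, tsum_mul_left]
    calc m x = jostIter q lam 0 x + ∑' n, jostIter q lam (n + 1) x :=
          Summable.tsum_eq_zero_add (hmsum x)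
      _ = 1 + ∑' n, ∫ t in Set.Ioi x, D lam (t - x) * q t * jostIter q lam n t := rfl
      _ = 1 + ∫ t in Set.Ioi x, ∑' n, D lam (t - x) * q t * jostIter q lam n t := by
          rw [hswap]
      _ = 1 + ∫ t in Set.Ioi x, D lam (t - x) * q t * m t := by
          congr 1
          exact setIntegral_congr_fun measurableSet_Ioi (fun t _ => hsum_int t)
  refine ⟨⟨m, hmcont, hmeq, fun x => by simpa [div_eq_mul_inv] using hmb x⟩, ?_⟩
  -- uniqueness
  rintro m₁ m₂ hm₁ hm₂ ⟨C₁, hC₁⟩ ⟨C₂, hC₂⟩ he₁ he₂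
  set d : ℝ → ℂ := fun t => m₁ t - m₂ t with hddef
  set C : ℝ := max C₁ 0 + max C₂ 0 with hCdef
  have hC0 : 0 ≤ C := by positivity
  have hdb : ∀ᵐ t ∂(volume : Measure ℝ), ‖d t‖ ≤ C := by
    filter_upwards [hC₁, hC₂] with t h1 h2
    calc ‖d t‖ ≤ ‖m₁ t‖ + ‖m₂ t‖ := norm_sub_le _ _
      _ ≤ C := add_le_add (h1.trans (le_max_left _ _)) (h2.trans (le_max_left _ _))
  have hdmeas : AEStronglyMeasurable d volume :=
    (hm₁.sub hm₂).aestronglyMeasurable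
  have hint : ∀ (g : ℝ → ℂ) (Cg : ℝ), Measurable g →
      (∀ᵐ t ∂(volume : Measure ℝ), ‖g t‖ ≤ Cg) → ∀ x,
      Integrable (fun t => D lam (t - x) * q t * g t) (volume.restrict (Set.Ioi x)) := by
    intro g Cg hgm hgb x
    refine Integrable.mono' ((hf.const_mul (k * max Cg 0)).restrict)
      (((hDmeas x).aestronglyMeasurable.mul hq.1).mul hgm.aestronglyMeasurable).restrict
      ?_
    filter_upwards [ae_restrict_of_ae hgb] with t hgt
    calc ‖D lam (t - x) * q t * g t‖ = ‖D lam (t - x)‖ * ‖q t‖ * ‖g t‖ := by simp [norm_mul]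
      _ ≤ k * ‖q t‖ * max Cg 0 := by
          apply mul_le_mul (mul_le_mul_of_nonneg_right (D_bound lam him (t - x))
            (norm_nonneg _)) (hgt.trans (le_max_left _ _)) (norm_nonneg _) (by positivity)
      _ = (k * max Cg 0) * f t := by rw [hfdef]; ring
  have hde : ∀ x, d x = ∫ t in Set.Ioi x, D lam (t - x) * q t * d t := by
    intro x
    have h1 := hint m₁ C₁ hm₁ hC₁ x
    have h2 := hint m₂ C₂ hm₂ hC₂ x
    have : d x = (∫ t in Set.Ioi x, D lam (t - x) * q t * m₁ t)
        - ∫ t in Set.Ioi x, D lam (t - x) * q t * m₂ t := by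
      rw [hddef]
      simp only
      rw [he₁ x, he₂ x]
      ring
    rw [this, ← integral_sub h1 h2]
    refine setIntegral_congr_fun measurableSet_Ioi (fun t _ => ?_)
    rw [hddef]
    ring
  -- inductive a.e. bound
  have hstep : ∀ n : ℕ, (∀ᵐ t ∂(volume : Measure ℝ), ‖d t‖ ≤ C * ((k * Qi f t) ^ n / n.factorial)) →
      ∀ x, ‖d x‖ ≤ C * ((k * Qi f x) ^ (n + 1) / (n + 1).factorial) := by
    intro n hn x
    have hInt : IntegrableOn (fun t => (C * k ^ (n + 1) / n.factorial) * (Qi f t ^ n * f t))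
        (Set.Ioi x) := ((Qi_pow_mul_integrable hf hf0 n).const_mul _).integrableOn
    have hle : ‖d x‖ ≤ ∫ t in Set.Ioi x,
        (C * k ^ (n + 1) / n.factorial) * (Qi f t ^ n * f t) := by
      rw [hde x]
      refine norm_integral_le_of_norm_le hInt ?_
      filter_upwards [ae_restrict_of_ae hn] with t hdt
      calc ‖D lam (t - x) * q t * d t‖ = ‖D lam (t - x)‖ * ‖q t‖ * ‖d t‖ := by
            simp [norm_mul]
        _ ≤ k * ‖q t‖ * (C * ((k * Qi f t) ^ n / n.factorial)) := by
            apply mul_le_mul (mul_le_mul_of_nonneg_right (D_bound lam him (t - x))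
              (norm_nonneg _)) hdt (norm_nonneg _) (by positivity)
        _ = (C * k ^ (n + 1) / n.factorial) * (Qi f t ^ n * f t) := by
            rw [hfdef, mul_pow]
            ring
    refine hle.trans (le_of_eq ?_)
    rw [integral_const_mul, Qi_key hf hf0 n x, mul_pow, Nat.factorial_succ]
    push_cast
    have hfn : (n.factorial : ℝ) ≠ 0 := by positivity
    field_simp
  have hae : ∀ n : ℕ, ∀ᵐ t ∂(volume : Measure ℝ),
      ‖d t‖ ≤ C * ((k * Qi f t) ^ n / n.factorial) := by
    intro n
    induction n with
    | zero => simpa using hdb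
    | succ n ih => exact ae_of_all _ (hstep n ih)
  have hzero : ∀ x, d x = 0 := by
    intro x
    have hbnd : ∀ n : ℕ, ‖d x‖ ≤ C * u (n + 1) := by
      intro n
      refine (hstep n (hae n) x).trans ?_
      simp only [hudef]
      refine mul_le_mul_of_nonneg_left ?_ hC0
      gcongr
      · exact mul_nonneg hk.le (hQ0 x)
      · exact hQle x
    have htend : Filter.Tendsto (fun n : ℕ => C * u (n + 1)) Filter.atTop (nhds 0) := by
      have h1 : Filter.Tendsto (fun n : ℕ => u (n + 1)) Filter.atTop (nhds 0) :=
        (hu.tendsto_atTop_zero).comp (Filter.tendsto_add_atTop_nat 1)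
      simpa using h1.const_mul C
    have : ‖d x‖ ≤ 0 := ge_of_tendsto htend (Filter.Eventually.of_forall hbnd)
    simpa using norm_le_zero_iff.mp this
  exact ae_of_all _ (fun x => sub_eq_zero.mp (hzero x))
end

section
/- Let q ∈ L¹(ℝ) be complex-valued, λ ∈ ℂ with Im λ ≥ 0 and λ ≠ 0, and let m : ℝ → ℂ be a bounded measurable function satisfying the Jost integral equation m(x) = 1 + ∫_x^∞ D(t−x,λ) q(t) m(t) dt for all x ∈ ℝ. Then sup_{x∈ℝ} |m(x) − 1| ≤ (‖q‖_{L¹}/|λ|) · exp(‖q‖_{L¹}/|λ|). -/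
open MeasureTheory

section JostAux
open Set Filter Topology

lemma R_nonneg (g : ℝ → ℝ) (hg0 : ∀ t, 0 ≤ g t) (x : ℝ) : 0 ≤ ∫ t in Set.Ioi x, g t :=
  setIntegral_nonneg measurableSet_Ioi fun t _ => hg0 t

lemma R_anti (g : ℝ → ℝ) (hg : Integrable g) (hg0 : ∀ t, 0 ≤ g t) {x y : ℝ} (hxy : x ≤ y) :
    (∫ t in Set.Ioi y, g t) ≤ ∫ t in Set.Ioi x, g t := by
  apply setIntegral_mono_set hg.integrableOn
  · exact Filter.Eventually.of_forall fun t => hg0 t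
  · exact HasSubset.Subset.eventuallyLE (Set.Ioi_subset_Ioi hxy)

lemma R_le_total (g : ℝ → ℝ) (hg : Integrable g) (hg0 : ∀ t, 0 ≤ g t) (x : ℝ) :
    (∫ t in Set.Ioi x, g t) ≤ ∫ t, g t :=
  setIntegral_le_integral hg (Filter.Eventually.of_forall fun t => hg0 t)

lemma R_split (g : ℝ → ℝ) (hg : Integrable g) {x y : ℝ} (hxy : x ≤ y) :
    (∫ t in Set.Ioi x, g t) = (∫ t in Set.Ioc x y, g t) + ∫ t in Set.Ioi y, g t := by
  rw [← setIntegral_union (Set.Ioc_disjoint_Ioi le_rfl) measurableSet_Ioi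
      hg.integrableOn hg.integrableOn, Set.Ioc_union_Ioi_eq_Ioi hxy]

lemma R_cont (g : ℝ → ℝ) (hg : Integrable g) : Continuous fun x => ∫ t in Set.Ioi x, g t := by
  have : (fun x => ∫ t in Set.Ioi x, g t) =
      fun x => (∫ t in Set.Ioi (0:ℝ), g t) - ∫ t in (0:ℝ)..x, g t := by
    funext b
    rcases le_total 0 b with h | h
    · rw [intervalIntegral.integral_of_le h, R_split g hg h]; ring
    · rw [intervalIntegral.integral_of_ge h, R_split g hg (y := 0) h]; ring
  rw [this]
  exact continuous_const.sub (hg.continuous_primitive 0)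

lemma R_tendsto (g : ℝ → ℝ) (hg : Integrable g) :
    Tendsto (fun x => ∫ t in Set.Ioi x, g t) atTop (𝓝 0) := by
  have h := intervalIntegral_tendsto_integral_Ioi 0 hg.integrableOn tendsto_id
  have he : (fun x => ∫ t in Set.Ioi x, g t) =ᶠ[atTop]
      fun b => (∫ t in Set.Ioi (0:ℝ), g t) - ∫ t in (0:ℝ)..b, g t := by
    filter_upwards [eventually_ge_atTop (0:ℝ)] with b hb
    rw [intervalIntegral.integral_of_le hb, R_split g hg hb]; ring
  rw [tendsto_congr' he]
  have := tendsto_const_nhds (x := (∫ t in Set.Ioi (0:ℝ), g t)) (f := atTop (α := ℝ)) |>.sub h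
  simpa using this

lemma exp_tail_integrable (g : ℝ → ℝ) (hg : Integrable g) (hg0 : ∀ t, 0 ≤ g t) (k : ℝ) :
    Integrable (fun t => g t * Real.exp (k * ∫ s in Set.Ioi t, g s)) := by
  have hcont : Continuous fun t => Real.exp (k * ∫ s in Set.Ioi t, g s) :=
    Real.continuous_exp.comp (continuous_const.mul (R_cont g hg))
  have := hg.bdd_mul (c := Real.exp (k * ∫ t, g t) + Real.exp (-(k * ∫ t, g t))) hcont.aestronglyMeasurable
    (Filter.Eventually.of_forall fun x => by
      rcases le_total 0 k with hk | hk
      · rw [Real.norm_eq_abs, abs_of_pos (Real.exp_pos _)]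
        have := Real.exp_le_exp.2 (mul_le_mul_of_nonneg_left (R_le_total g hg hg0 x) hk)
        nlinarith [Real.exp_pos (-(k * ∫ t, g t))]
      · rw [Real.norm_eq_abs, abs_of_pos (Real.exp_pos _)]
        have h1 : k * ∫ s in Set.Ioi x, g s ≤ -(k * ∫ t, g t) := by
          nlinarith [R_le_total g hg hg0 x, R_nonneg g hg0 x,
            integral_nonneg (μ := (volume : MeasureTheory.Measure ℝ)) (f := g) (fun t => hg0 t)]
        have := Real.exp_le_exp.2 h1
        nlinarith [Real.exp_pos (k * ∫ t, g t)])
  simpa [mul_comm] using this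

lemma key_claim (g : ℝ → ℝ) (hg : Integrable g) (hg0 : ∀ t, 0 ≤ g t)
    (k : ℝ) (hk : 0 < k) (ε : ℝ) (hε : 0 < ε) :
    ∀ n : ℕ, ∀ x : ℝ, (∫ t in Set.Ioi x, g t) ≤ n * ε →
      k * ∫ t in Set.Ioi x, g t * Real.exp (k * ∫ s in Set.Ioi t, g s) ≤
        Real.exp (k * ε) * (Real.exp (k * ∫ t in Set.Ioi x, g t) - 1) := by
  intro n
  induction n with
  | zero =>
    intro x hx
    have hR0 : (∫ t in Set.Ioi x, g t) = 0 := le_antisymm (by simpa using hx) (R_nonneg g hg0 x)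
    have hg0' : g =ᵐ[volume.restrict (Set.Ioi x)] 0 := by
      have := (integral_eq_zero_iff_of_nonneg (fun t => hg0 t) hg.integrableOn).1 hR0
      exact this
    have : (∫ t in Set.Ioi x, g t * Real.exp (k * ∫ s in Set.Ioi t, g s)) = 0 := by
      have hz : (fun t => g t * Real.exp (k * ∫ s in Set.Ioi t, g s)) =ᵐ[volume.restrict (Set.Ioi x)]
          (0 : ℝ → ℝ) := by
        filter_upwards [hg0'] with t ht
        simp only [Pi.zero_apply] at ht ⊢
        simp [ht]
      rw [integral_congr_ae hz]; simp
    rw [this, hR0]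
    simp
  | succ n ih =>
    intro x hx
    by_cases hn : (∫ t in Set.Ioi x, g t) ≤ n * ε
    · exact ih x hn
    push_neg at hn
    by_cases hxe : (∫ t in Set.Ioi x, g t) ≤ ε
    · -- direct bound: integrand ≤ g t * exp (k * R x)
      set Rx := ∫ t in Set.Ioi x, g t with hRx
      have hmono : ∀ t ∈ Set.Ioi x, g t * Real.exp (k * ∫ s in Set.Ioi t, g s) ≤
          g t * Real.exp (k * Rx) := fun t ht =>
        mul_le_mul_of_nonneg_left
          (Real.exp_le_exp.2 (mul_le_mul_of_nonneg_left (R_anti g hg hg0 ht.le) hk.le)) (hg0 t)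
      have h1 : (∫ t in Set.Ioi x, g t * Real.exp (k * ∫ s in Set.Ioi t, g s)) ≤
          ∫ t in Set.Ioi x, g t * Real.exp (k * Rx) := by
        apply setIntegral_mono_on (exp_tail_integrable g hg hg0 k).integrableOn
          (hg.integrableOn.mul_const _) measurableSet_Ioi hmono
      rw [integral_mul_const] at h1
      have h2 : k * (Rx * Real.exp (k * Rx)) ≤ Real.exp (k * ε) * (Real.exp (k * Rx) - 1) := by
        have e1 : k * Rx + 1 ≤ Real.exp (k * Rx) := Real.add_one_le_exp _
        have e2 : Real.exp (k * Rx) ≤ Real.exp (k * ε) :=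
          Real.exp_le_exp.2 (mul_le_mul_of_nonneg_left hxe hk.le)
        nlinarith [Real.exp_pos (k * Rx), mul_nonneg hk.le (R_nonneg g hg0 x)]
      calc k * ∫ t in Set.Ioi x, g t * Real.exp (k * ∫ s in Set.Ioi t, g s)
          ≤ k * (Rx * Real.exp (k * Rx)) := by
            apply mul_le_mul_of_nonneg_left _ hk.le
            simpa [mul_comm] using h1
        _ ≤ _ := h2
    · push_neg at hxe
      set Rx := ∫ t in Set.Ioi x, g t with hRx
      -- find y with R y = Rx - ε
      obtain ⟨T, hT⟩ : ∃ T, x ≤ T ∧ (∫ t in Set.Ioi T, g t) ≤ Rx - ε := by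
        have h1 : ∀ᶠ T in atTop, (∫ t in Set.Ioi T, g t) ≤ Rx - ε :=
          (R_tendsto g hg).eventually_le_const (by linarith)
        rcases (h1.and (eventually_ge_atTop x)).exists with ⟨T, h2, h3⟩
        exact ⟨T, h3, h2⟩
      obtain ⟨y, hy, hRy⟩ : ∃ y ∈ Set.Icc x T, (∫ t in Set.Ioi y, g t) = Rx - ε := by
        have := intermediate_value_Icc' hT.1 ((R_cont g hg).continuousOn)
        have hmem : Rx - ε ∈ Set.Icc (∫ t in Set.Ioi T, g t) Rx := ⟨hT.2, by linarith⟩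
        rcases this hmem with ⟨y, hy1, hy2⟩
        exact ⟨y, hy1, hy2⟩
      have hxy : x ≤ y := hy.1
      have hsplit := R_split (fun t => g t * Real.exp (k * ∫ s in Set.Ioi t, g s))
        (exp_tail_integrable g hg hg0 k) hxy
      -- bound on Ioc x y
      have hIoc : (∫ t in Set.Ioc x y, g t * Real.exp (k * ∫ s in Set.Ioi t, g s)) ≤
          Real.exp (k * Rx) * ε := by
        have hmono : ∀ t ∈ Set.Ioc x y, g t * Real.exp (k * ∫ s in Set.Ioi t, g s) ≤
            g t * Real.exp (k * Rx) := fun t ht =>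
          mul_le_mul_of_nonneg_left
            (Real.exp_le_exp.2 (mul_le_mul_of_nonneg_left (R_anti g hg hg0 ht.1.le) hk.le)) (hg0 t)
        have h1 : (∫ t in Set.Ioc x y, g t * Real.exp (k * ∫ s in Set.Ioi t, g s)) ≤
            ∫ t in Set.Ioc x y, g t * Real.exp (k * Rx) :=
          setIntegral_mono_on ((exp_tail_integrable g hg hg0 k).integrableOn)
            (hg.integrableOn.mul_const _) measurableSet_Ioc hmono
        rw [integral_mul_const] at h1
        have h2 : (∫ t in Set.Ioc x y, g t) = ε := by
          have := R_split g hg hxy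
          rw [hRy] at this; linarith
        rw [h2] at h1; linarith [h1]
      -- IH at y
      have hihy : k * ∫ t in Set.Ioi y, g t * Real.exp (k * ∫ s in Set.Ioi t, g s) ≤
          Real.exp (k * ε) * (Real.exp (k * (Rx - ε)) - 1) := by
        have := ih y (by rw [hRy]; push_cast at hx ⊢; linarith)
        rwa [hRy] at this
      -- combine
      have hexp : Real.exp (k * Rx) = Real.exp (k * ε) * Real.exp (k * (Rx - ε)) := by
        rw [← Real.exp_add]; ring_nf
      have e1 : k * ε + 1 ≤ Real.exp (k * ε) := Real.add_one_le_exp _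
      have hk1 : k * (∫ t in Set.Ioi x, g t * Real.exp (k * ∫ s in Set.Ioi t, g s)) =
          k * (∫ t in Set.Ioc x y, g t * Real.exp (k * ∫ s in Set.Ioi t, g s)) +
          k * (∫ t in Set.Ioi y, g t * Real.exp (k * ∫ s in Set.Ioi t, g s)) := by
        rw [hsplit]; ring
      rw [hk1]
      have hb : k * (∫ t in Set.Ioc x y, g t * Real.exp (k * ∫ s in Set.Ioi t, g s)) ≤
          k * (Real.exp (k * Rx) * ε) :=
        mul_le_mul_of_nonneg_left hIoc hk.le
      have hpos : 0 < Real.exp (k * (Rx - ε)) := Real.exp_pos _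
      have hAB : 0 < Real.exp (k * ε) * Real.exp (k * (Rx - ε)) :=
        mul_pos (Real.exp_pos _) hpos
      have h3 : k * ε * (Real.exp (k * ε) * Real.exp (k * (Rx - ε))) ≤
          (Real.exp (k * ε) - 1) * (Real.exp (k * ε) * Real.exp (k * (Rx - ε))) :=
        mul_le_mul_of_nonneg_right (by linarith) hAB.le
      rw [hexp] at hb ⊢
      linarith

lemma key_exp (g : ℝ → ℝ) (hg : Integrable g) (hg0 : ∀ t, 0 ≤ g t)
    (k : ℝ) (hk : 0 < k) (x : ℝ) :
    k * ∫ t in Set.Ioi x, g t * Real.exp (k * ∫ s in Set.Ioi t, g s) ≤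
      Real.exp (k * ∫ t in Set.Ioi x, g t) - 1 := by
  have hlim : Tendsto (fun ε : ℝ => Real.exp (k * ε) *
      (Real.exp (k * ∫ t in Set.Ioi x, g t) - 1)) (𝓝[>] 0)
      (𝓝 (Real.exp (k * ∫ t in Set.Ioi x, g t) - 1)) := by
    have : Tendsto (fun ε : ℝ => Real.exp (k * ε) *
        (Real.exp (k * ∫ t in Set.Ioi x, g t) - 1)) (𝓝 0)
        (𝓝 (Real.exp (k * 0) * (Real.exp (k * ∫ t in Set.Ioi x, g t) - 1))) := by
      exact ((Real.continuous_exp.comp (continuous_const.mul continuous_id)).mul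
        continuous_const).tendsto 0
    simpa using this.mono_left nhdsWithin_le_nhds
  refine ge_of_tendsto hlim ?_
  filter_upwards [self_mem_nhdsWithin] with ε (hε : 0 < ε)
  exact key_claim g hg hg0 k hk ε hε (Nat.ceil ((∫ t in Set.Ioi x, g t) / ε)) x
    (by rw [← div_le_iff₀ hε] at *; exact le_trans (Nat.le_ceil _) (by simp))

theorem jost_solution_minus_one_bound (q : ℝ → ℂ) (hq : Integrable q)
    (lam : ℂ) (him : 0 ≤ lam.im) (hne : lam ≠ 0)
    (m : ℝ → ℂ) (hmeas : Measurable m) (hbd : ∃ C, ∀ x, ‖m x‖ ≤ C)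
    (heq : ∀ x, m x = 1 + ∫ t in Set.Ioi x, D lam (t - x) * q t * m t) :
    ∀ x, ‖m x - 1‖ ≤ (∫ t, ‖q t‖) / ‖lam‖ *
      Real.exp ((∫ t, ‖q t‖) / ‖lam‖) := by
  obtain ⟨C, hC⟩ := hbd
  set g : ℝ → ℝ := fun t => ‖q t‖ with hgdef
  have hg : Integrable g := hq.norm
  have hg0 : ∀ t, 0 ≤ g t := fun t => norm_nonneg _
  set k : ℝ := (‖lam‖)⁻¹ with hkdef
  have habs : 0 < ‖lam‖ := norm_pos_iff.mpr hne
  have hk : 0 < k := inv_pos.2 habs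
  set Q : ℝ := ∫ t, g t with hQdef
  have hQ0 : 0 ≤ Q := integral_nonneg hg0
  set f : ℝ → ℝ := fun x => ‖m x - 1‖ with hfdef
  have hfm : Measurable f := (hmeas.sub measurable_const).norm
  have hf0 : ∀ x, 0 ≤ f x := fun x => norm_nonneg _
  have hfC : ∀ x, f x ≤ C + 1 := by
    intro x
    calc f x ≤ ‖m x‖ + ‖(1:ℂ)‖ := norm_sub_le _ _
      _ ≤ C + 1 := by simpa using add_le_add_right (hC x) 1
  -- bound on the kernel
  have hD : ∀ y : ℝ, ‖D lam y‖ ≤ k := by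
    intro y
    rw [D]
    split_ifs with hy
    · rw [norm_div]
      have h1 : ‖Complex.exp (2 * Complex.I * lam * y) - 1‖ ≤ 2 := by
        refine (norm_sub_le _ _).trans ?_
        have h2 : ‖Complex.exp (2 * Complex.I * lam * (y:ℂ))‖ ≤ 1 := by
          rw [Complex.norm_exp]
          rw [Real.exp_le_one_iff]
          simp only [Complex.mul_re, Complex.mul_im, Complex.I_re, Complex.I_im,
            Complex.ofReal_re, Complex.ofReal_im, Complex.re_ofNat, Complex.im_ofNat]
          nlinarith [mul_nonneg him hy.le]
        rw [norm_one]
        linarith [h2]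
      have h3 : ‖2 * Complex.I * lam‖ = 2 * ‖lam‖ := by
        simp [norm_mul]
      have hkk : (2:ℝ) / (2 * ‖lam‖) = k := by
        rw [hkdef]; field_simp
      rw [h3, ← hkk]
      gcongr
    · simp [hk.le]
  have hgf_int : Integrable (fun t => g t * f t) := by
    have := hg.bdd_mul (c := C + 1) hfm.aestronglyMeasurable
      (Filter.Eventually.of_forall fun x => by
        rw [Real.norm_eq_abs, abs_of_nonneg (hf0 x)]; exact hfC x)
    simpa [mul_comm] using this
  -- the basic integral inequality
  have hstep : ∀ x, f x ≤ k * Q + k * ∫ t in Set.Ioi x, g t * f t := by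
    intro x
    have h0 : f x = ‖∫ t in Set.Ioi x, D lam (t - x) * q t * m t‖ := by
      show ‖m x - 1‖ = _
      rw [heq x]; rw [add_sub_cancel_left]
    have h1 : f x ≤ ∫ t in Set.Ioi x, ‖D lam (t - x) * q t * m t‖ := by
      rw [h0]; exact norm_integral_le_integral_norm _
    have hint2 : Integrable (fun t => k * (g t + g t * f t)) (volume.restrict (Set.Ioi x)) :=
      ((hg.integrableOn.add hgf_int.integrableOn).const_mul k)
    have h2 : (∫ t in Set.Ioi x, ‖D lam (t - x) * q t * m t‖) ≤
        ∫ t in Set.Ioi x, k * (g t + g t * f t) := by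
      apply integral_mono_of_nonneg (Filter.Eventually.of_forall fun t => norm_nonneg _) hint2
      apply Filter.Eventually.of_forall
      intro t
      have hmt : ‖m t‖ ≤ 1 + f t := by
        calc ‖m t‖ = ‖1 + (m t - 1)‖ := by ring_nf
          _ ≤ ‖(1:ℂ)‖ + ‖m t - 1‖ := norm_add_le _ _
          _ = 1 + f t := by simp [hfdef]
      calc ‖D lam (t - x) * q t * m t‖ = ‖D lam (t - x)‖ * g t * ‖m t‖ := by
            rw [norm_mul, norm_mul]
        _ ≤ k * g t * (1 + f t) :=
            mul_le_mul (mul_le_mul (hD _) le_rfl (hg0 t) hk.le) hmt (norm_nonneg _)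
              (by positivity)
        _ = k * (g t + g t * f t) := by ring
    have h3 : (∫ t in Set.Ioi x, k * (g t + g t * f t)) =
        k * (∫ t in Set.Ioi x, g t) + k * ∫ t in Set.Ioi x, g t * f t := by
      rw [integral_const_mul, integral_add hg.integrableOn hgf_int.integrableOn]
      ring
    have h4 : k * (∫ t in Set.Ioi x, g t) ≤ k * Q :=
      mul_le_mul_of_nonneg_left (R_le_total g hg hg0 x) hk.le
    linarith
  -- weighted supremum
  set M : ℝ := ⨆ x : ℝ, f x * Real.exp (-(k * ∫ t in Set.Ioi x, g t)) with hMdef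
  have hbddM : BddAbove (Set.range fun x => f x * Real.exp (-(k * ∫ t in Set.Ioi x, g t))) := by
    refine ⟨C + 1, ?_⟩
    rintro _ ⟨x, rfl⟩
    have h1 : Real.exp (-(k * ∫ t in Set.Ioi x, g t)) ≤ 1 := by
      rw [Real.exp_le_one_iff]
      nlinarith [R_nonneg g hg0 x, hk.le]
    have h2 : 0 ≤ C + 1 := (hf0 x).trans (hfC x)
    calc f x * Real.exp (-(k * ∫ t in Set.Ioi x, g t)) ≤ (C + 1) * 1 :=
        mul_le_mul (hfC x) h1 (Real.exp_pos _).le h2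
      _ = C + 1 := mul_one _
  have hMx : ∀ x, f x * Real.exp (-(k * ∫ t in Set.Ioi x, g t)) ≤ M := fun x =>
    le_ciSup hbddM x
  have hM0 : 0 ≤ M := le_trans (by positivity) (hMx 0)
  have hfle : ∀ t, f t ≤ M * Real.exp (k * ∫ s in Set.Ioi t, g s) := by
    intro t
    have h1 := mul_le_mul_of_nonneg_right (hMx t) (Real.exp_pos (k * ∫ s in Set.Ioi t, g s)).le
    rwa [mul_assoc, ← Real.exp_add, neg_add_cancel, Real.exp_zero, mul_one] at h1
  have hintM : Integrable (fun t => g t * (M * Real.exp (k * ∫ s in Set.Ioi t, g s))) := by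
    have := (exp_tail_integrable g hg hg0 k).const_mul M
    apply this.congr
    · exact Filter.Eventually.of_forall fun t => by ring
  have hkey2 : ∀ x, f x ≤ k * Q + M * (Real.exp (k * ∫ t in Set.Ioi x, g t) - 1) := by
    intro x
    have h1 := hstep x
    have h2 : (∫ t in Set.Ioi x, g t * f t) ≤
        ∫ t in Set.Ioi x, g t * (M * Real.exp (k * ∫ s in Set.Ioi t, g s)) := by
      apply integral_mono_of_nonneg
        (Filter.Eventually.of_forall fun t => mul_nonneg (hg0 t) (hf0 t))
        hintM.integrableOn
      exact Filter.Eventually.of_forall fun t =>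
        mul_le_mul_of_nonneg_left (hfle t) (hg0 t)
    have h3 : (∫ t in Set.Ioi x, g t * (M * Real.exp (k * ∫ s in Set.Ioi t, g s))) =
        M * ∫ t in Set.Ioi x, g t * Real.exp (k * ∫ s in Set.Ioi t, g s) := by
      rw [← integral_const_mul]
      apply integral_congr_ae
      exact Filter.Eventually.of_forall fun t => by ring
    have h4 := key_exp g hg hg0 k hk x
    have h5 : M * (k * ∫ t in Set.Ioi x, g t * Real.exp (k * ∫ s in Set.Ioi t, g s)) ≤
        M * (Real.exp (k * ∫ t in Set.Ioi x, g t) - 1) :=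
      mul_le_mul_of_nonneg_left h4 hM0
    have h6 : k * (∫ t in Set.Ioi x, g t * f t) ≤
        M * (Real.exp (k * ∫ t in Set.Ioi x, g t) - 1) := by
      calc k * (∫ t in Set.Ioi x, g t * f t) ≤
          k * (M * ∫ t in Set.Ioi x, g t * Real.exp (k * ∫ s in Set.Ioi t, g s)) := by
            rw [← h3]; exact mul_le_mul_of_nonneg_left h2 hk.le
        _ = M * (k * ∫ t in Set.Ioi x, g t * Real.exp (k * ∫ s in Set.Ioi t, g s)) := by ring
        _ ≤ _ := h5
    linarith
  have hMle : M ≤ k * Q := by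
    by_contra hcon
    push_neg at hcon
    have hub : ∀ x, f x * Real.exp (-(k * ∫ t in Set.Ioi x, g t)) ≤
        M - (M - k * Q) * Real.exp (-(k * Q)) := by
      intro x
      have h1 := hkey2 x
      have hex : (0:ℝ) < Real.exp (-(k * ∫ t in Set.Ioi x, g t)) := Real.exp_pos _
      have hexx : Real.exp (-(k * Q)) ≤ Real.exp (-(k * ∫ t in Set.Ioi x, g t)) := by
        apply Real.exp_le_exp.2
        have := R_le_total g hg hg0 x
        nlinarith
      have hmul := mul_le_mul_of_nonneg_right h1 hex.le
      have hprod : Real.exp (k * ∫ t in Set.Ioi x, g t) *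
          Real.exp (-(k * ∫ t in Set.Ioi x, g t)) = 1 := by
        rw [← Real.exp_add]; simp
      have hexpand : (k * Q + M * (Real.exp (k * ∫ t in Set.Ioi x, g t) - 1)) *
          Real.exp (-(k * ∫ t in Set.Ioi x, g t)) =
          k * Q * Real.exp (-(k * ∫ t in Set.Ioi x, g t)) +
          M * (Real.exp (k * ∫ t in Set.Ioi x, g t) *
            Real.exp (-(k * ∫ t in Set.Ioi x, g t))) -
          M * Real.exp (-(k * ∫ t in Set.Ioi x, g t)) := by ring
      rw [hprod, mul_one] at hexpand
      have hprod2 : 0 ≤ (M - k * Q) *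
          (Real.exp (-(k * ∫ t in Set.Ioi x, g t)) - Real.exp (-(k * Q))) :=
        mul_nonneg (by linarith) (by linarith)
      nlinarith [hmul, hexpand, hprod2]
    have hle : M ≤ M - (M - k * Q) * Real.exp (-(k * Q)) := by
      rw [hMdef]
      exact ciSup_le hub
    have := mul_pos (sub_pos.2 hcon) (Real.exp_pos (-(k * Q)))
    linarith
  -- finish
  intro x
  have h1 := hkey2 x
  have h2 : Real.exp (k * ∫ t in Set.Ioi x, g t) - 1 ≤ Real.exp (k * Q) - 1 := by
    have := Real.exp_le_exp.2 (mul_le_mul_of_nonneg_left (R_le_total g hg hg0 x) hk.le)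
    linarith
  have h3 : (0:ℝ) ≤ Real.exp (k * ∫ t in Set.Ioi x, g t) - 1 := by
    have := Real.one_le_exp (mul_nonneg hk.le (R_nonneg g hg0 x))
    linarith
  have hMQ : M * (Real.exp (k * ∫ t in Set.Ioi x, g t) - 1) ≤
      (k * Q) * (Real.exp (k * Q) - 1) :=
    mul_le_mul hMle h2 h3 (by positivity)
  have hkQ : k * Q = Q / ‖lam‖ := by
    rw [hkdef, div_eq_mul_inv, mul_comm]
  have hfx : f x ≤ k * Q + k * Q * (Real.exp (k * Q) - 1) := by linarith
  show f x ≤ Q / ‖lam‖ * Real.exp (Q / ‖lam‖)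
  rw [← hkQ]
  nlinarith [hfx]

end JostAux
end

section
/- Let q ∈ L¹(ℝ) be complex-valued, let λ be a nonzero real number, and let m : ℝ → ℂ be a bounded measurable solution of the Jost integral equation for q and λ. Define a(λ) := 1 − (2iλ)^{-1} ∫_ℝ q(t) m(t) dt and b(λ) := (2iλ)^{-1} ∫_ℝ e^{2iλt} q(t) m(t) dt. Then the function e(x) := e^{iλx} m(x) satisfies e(x) − a(λ) e^{iλx} − b(λ) e^{-iλx} → 0 as x → −∞. -/
open MeasureTheory Filter

lemma tendsto_setIntegral_Iic_atBot (f : ℝ → ℂ) (hf : Integrable f) :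
    Tendsto (fun x : ℝ => ∫ t in Set.Iic x, f t) atBot (nhds 0) := by
  have h1 : Tendsto (fun y : ℝ => ∫ t in Set.Iic (-y), f t) atTop
      (nhds (∫ t in ⋂ y : ℝ, Set.Iic (-y), f t)) :=
    tendsto_setIntegral_of_antitone (fun _ => measurableSet_Iic)
      (fun a b hab => Set.Iic_subset_Iic.mpr (neg_le_neg hab)) ⟨0, hf.integrableOn⟩
  have hempty : ⋂ y : ℝ, Set.Iic (-y) = ∅ := by
    ext z
    simp only [Set.mem_iInter, Set.mem_Iic, Set.mem_empty_iff_false, iff_false, not_forall]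
    exact ⟨1 - z, by rw [not_le]; linarith⟩
  rw [hempty] at h1
  simp only [Measure.restrict_empty, integral_zero_measure] at h1
  have h2 := h1.comp tendsto_neg_atBot_atTop
  simpa [Function.comp_def, neg_neg] using h2

theorem jost_asymptotics_at_minus_infinity (q : ℝ → ℂ) (hq : Integrable q)
    (lam : ℝ) (hne : lam ≠ 0)
    (m : ℝ → ℂ) (hmeas : Measurable m) (hbd : ∃ C, ∀ x, ‖m x‖ ≤ C)
    (heq : ∀ x, m x = 1 + ∫ t in Set.Ioi x, D (lam : ℂ) (t - x) * q t * m t) :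
    Tendsto (fun x : ℝ =>
        Complex.exp (Complex.I * lam * x) * m x
          - (1 - (2 * Complex.I * lam)⁻¹ * ∫ t : ℝ, q t * m t)
              * Complex.exp (Complex.I * lam * x)
          - ((2 * Complex.I * lam)⁻¹ * ∫ t : ℝ, Complex.exp (2 * Complex.I * lam * t) * q t * m t)
              * Complex.exp (-(Complex.I * lam * x)))
      atBot (nhds 0) := by
  have hcne : (2 * Complex.I * (lam : ℂ)) ≠ 0 :=
    mul_ne_zero (mul_ne_zero two_ne_zero Complex.I_ne_zero) (Complex.ofReal_ne_zero.mpr hne)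
  -- integrability
  have hf : Integrable (fun t => q t * m t) := by
    have h := hq.bdd_mul hmeas.aestronglyMeasurable (Filter.Eventually.of_forall hbd.choose_spec)
    simpa [mul_comm] using h
  have hexp1 : ∀ t : ℝ, ‖Complex.exp (2 * Complex.I * (lam : ℂ) * t)‖ = 1 := by
    intro t
    rw [show (2 * Complex.I * (lam : ℂ) * t) = ((2 * lam * t : ℝ) : ℂ) * Complex.I by
      push_cast; ring]
    exact Complex.norm_exp_ofReal_mul_I _
  have hg : Integrable (fun t : ℝ => Complex.exp (2 * Complex.I * (lam : ℂ) * t) * (q t * m t)) := by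
    refine hf.bdd_mul (c := 1) ?_ (Filter.Eventually.of_forall fun t => le_of_eq (hexp1 t))
    exact (Complex.continuous_exp.comp (continuous_const.mul Complex.continuous_ofReal)).aestronglyMeasurable
  -- the integrals of g written left-associated coincide
  have hgg : (∫ t : ℝ, Complex.exp (2 * Complex.I * (lam : ℂ) * t) * q t * m t)
      = ∫ t : ℝ, Complex.exp (2 * Complex.I * (lam : ℂ) * t) * (q t * m t) := by
    congr 1; ext t; ring
  -- key pointwise identity
  have key : ∀ x : ℝ,
      Complex.exp (Complex.I * lam * x) * m x
          - (1 - (2 * Complex.I * lam)⁻¹ * ∫ t : ℝ, q t * m t)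
              * Complex.exp (Complex.I * lam * x)
          - ((2 * Complex.I * lam)⁻¹ * ∫ t : ℝ, Complex.exp (2 * Complex.I * lam * t) * q t * m t)
              * Complex.exp (-(Complex.I * lam * x))
      = (2 * Complex.I * lam)⁻¹ *
          (Complex.exp (Complex.I * lam * x) * (∫ t in Set.Iic x, q t * m t)
           - Complex.exp (-(Complex.I * lam * x)) *
               (∫ t in Set.Iic x, Complex.exp (2 * Complex.I * (lam : ℂ) * t) * (q t * m t))) := by
    intro x
    have hIoi : (∫ t in Set.Ioi x, D (lam : ℂ) (t - x) * q t * m t)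
        = (2 * Complex.I * lam)⁻¹ * (Complex.exp (-(2 * Complex.I * lam * x)) *
            ∫ t in Set.Ioi x, Complex.exp (2 * Complex.I * (lam : ℂ) * t) * (q t * m t))
          - (2 * Complex.I * lam)⁻¹ * ∫ t in Set.Ioi x, q t * m t := by
      have h0 : (∫ t in Set.Ioi x, D (lam : ℂ) (t - x) * q t * m t)
          = ∫ t in Set.Ioi x, ((2 * Complex.I * lam)⁻¹ * (Complex.exp (-(2 * Complex.I * lam * x)) *
              (Complex.exp (2 * Complex.I * (lam : ℂ) * t) * (q t * m t)))
            - (2 * Complex.I * lam)⁻¹ * (q t * m t)) := by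
        refine setIntegral_congr_fun measurableSet_Ioi (fun t ht => ?_)
        have hpos : 0 < t - x := sub_pos.mpr ht
        have hE : Complex.exp (2 * Complex.I * (lam : ℂ) * ((t : ℝ) - x : ℝ))
            = Complex.exp (2 * Complex.I * (lam : ℂ) * t) *
              Complex.exp (-(2 * Complex.I * lam * x)) := by
          rw [← Complex.exp_add]; congr 1; push_cast; ring
        simp only [D, if_pos hpos, hE]
        field_simp
      rw [h0, integral_sub ((hg.integrableOn.const_mul _).const_mul _)
        (hf.integrableOn.const_mul _), integral_const_mul, integral_const_mul, integral_const_mul]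
    have hsplitf := intervalIntegral.integral_Iic_add_Ioi (b := x) hf.integrableOn hf.integrableOn
    have hsplitg := intervalIntegral.integral_Iic_add_Ioi (b := x) hg.integrableOn hg.integrableOn
    have hEE : Complex.exp (-(Complex.I * lam * x))
        = Complex.exp (Complex.I * lam * x) * Complex.exp (-(2 * Complex.I * lam * x)) := by
      rw [← Complex.exp_add]; congr 1; ring
    rw [heq x, hIoi, hgg, ← hsplitf, ← hsplitg, hEE]
    ring
  simp only [key]
  have h1 : Tendsto (fun x : ℝ => Complex.exp (Complex.I * lam * x) *
      (∫ t in Set.Iic x, q t * m t)) atBot (nhds 0) := by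
    rw [tendsto_zero_iff_norm_tendsto_zero]
    have hA := (tendsto_setIntegral_Iic_atBot _ hf).norm
    simp only [norm_zero] at hA
    refine hA.congr (fun x => ?_)
    rw [norm_mul, show Complex.I * (lam : ℂ) * x = ((lam * x : ℝ) : ℂ) * Complex.I by
      push_cast; ring, Complex.norm_exp_ofReal_mul_I, one_mul]
  have h2 : Tendsto (fun x : ℝ => Complex.exp (-(Complex.I * lam * x)) *
      (∫ t in Set.Iic x, Complex.exp (2 * Complex.I * (lam : ℂ) * t) * (q t * m t))) atBot (nhds 0) := by
    rw [tendsto_zero_iff_norm_tendsto_zero]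
    have hA := (tendsto_setIntegral_Iic_atBot _ hg).norm
    simp only [norm_zero] at hA
    refine hA.congr (fun x => ?_)
    rw [norm_mul, show -(Complex.I * (lam : ℂ) * x) = ((-(lam * x) : ℝ) : ℂ) * Complex.I by
      push_cast; ring, Complex.norm_exp_ofReal_mul_I, one_mul]
  have := (h1.sub h2).const_mul ((2 * Complex.I * (lam : ℂ))⁻¹)
  simpa using this
end

section
/- Let q ∈ L¹(ℝ) be real-valued, let λ be a nonzero real number, and let m : ℝ → ℂ be the (unique) bounded measurable solution of the Jost integral equation for q and λ. Define a(λ) := 1 − (2iλ)^{-1} ∫_ℝ q(t) m(t) dt and b(λ) := (2iλ)^{-1} ∫_ℝ e^{2iλt} q(t) m(t) dt. Then |a(λ)|² − |b(λ)|² = 1. -/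
open MeasureTheory

open scoped ComplexConjugate in
private lemma myIntegrableConj {f : ℝ → ℂ} (hf : Integrable f) :
    Integrable (fun t => conj (f t)) := by
  refine hf.norm.mono' ?_ ?_
  · exact Complex.continuous_conj.comp_aestronglyMeasurable hf.1
  · filter_upwards with t; simp

set_option maxHeartbeats 1000000 in
open scoped ComplexConjugate in
theorem scattering_coefficients_identity (q : ℝ → ℝ) (hq : Integrable q)
    (lam : ℝ) (hne : lam ≠ 0)
    (m : ℝ → ℂ) (hmeas : Measurable m) (hbd : ∃ C, ∀ x, ‖m x‖ ≤ C)
    (heq : ∀ x, m x = 1 + ∫ t in Set.Ioi x, D (lam : ℂ) (t - x) * (q t : ℂ) * m t) :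
    ‖1 - (2 * Complex.I * lam)⁻¹ * ∫ t : ℝ, (q t : ℂ) * m t‖ ^ 2
      - ‖(2 * Complex.I * lam)⁻¹ *
          ∫ t : ℝ, Complex.exp (2 * Complex.I * lam * t) * (q t : ℂ) * m t‖ ^ 2 = 1 := by
  obtain ⟨C, hC⟩ := hbd
  have hmae : AEStronglyMeasurable m (volume : Measure ℝ) := hmeas.aestronglyMeasurable
  set c : ℂ := 2 * Complex.I * (lam : ℂ) with hc_def
  have hc : c ≠ 0 := by simp [hc_def, Complex.ext_iff, hne]
  have hcc : conj c = -c := by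
    simp [hc_def, map_mul, Complex.conj_ofReal, Complex.conj_I, map_ofNat]
  -- D basic facts
  have hDmeas : Measurable (D (lam : ℂ)) := by
    unfold D
    refine Measurable.ite (measurableSet_lt measurable_const measurable_id) ?_ measurable_const
    exact (((Complex.continuous_exp.comp
      (continuous_const.mul Complex.continuous_ofReal)).sub continuous_const).div_const
        _).measurable
  have hDbd : ∀ y : ℝ, ‖D (lam : ℂ) y‖ ≤ |lam|⁻¹ := by
    intro y
    unfold D
    split
    · rw [norm_div]
      have h1 : ‖Complex.exp (2 * Complex.I * (lam : ℂ) * y) - 1‖ ≤ 2 := by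
        calc ‖Complex.exp (2 * Complex.I * (lam : ℂ) * y) - 1‖
            ≤ ‖Complex.exp (2 * Complex.I * (lam : ℂ) * y)‖ + ‖(1 : ℂ)‖ := norm_sub_le _ _
          _ ≤ 2 := by
              rw [Complex.norm_exp]
              norm_num
      have h2 : ‖(2 * Complex.I * (lam : ℂ))‖ = 2 * |lam| := by
        simp [Complex.norm_I, Complex.norm_real]
      rw [h2, div_le_iff₀ (by positivity)]
      have h3 : |lam|⁻¹ * (2 * |lam|) = 2 := by field_simp
      rw [h3]; exact h1
    · simpa using inv_nonneg.mpr (abs_nonneg lam)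
  have hDpos : ∀ u v : ℝ, v < u →
      D (lam : ℂ) (u - v) = (Complex.exp (c * ((u : ℂ) - (v : ℂ))) - 1) / c := by
    intro u v huv
    rw [D, if_pos (by linarith : (0:ℝ) < u - v), Complex.ofReal_sub]
  have hDnonpos : ∀ u v : ℝ, u ≤ v → D (lam : ℂ) (u - v) = 0 := by
    intro u v huv
    rw [D, if_neg (by simp; linarith)]
  -- integrability of g = q·m and friends
  have hgsm : AEStronglyMeasurable (fun t => (q t : ℂ) * m t) (volume : Measure ℝ) :=
    (Complex.continuous_ofReal.comp_aestronglyMeasurable hq.1).mul hmae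
  have hg : Integrable (fun t => (q t : ℂ) * m t) :=
    (hq.ofReal.bdd_mul hmae (Filter.Eventually.of_forall hC)).congr
      (Filter.Eventually.of_forall fun t => mul_comm (m t) ((q t : ℂ)))
  have hexp1 : ∀ t : ℝ, ‖Complex.exp (c * (t : ℂ))‖ = 1 := by
    intro t; rw [Complex.norm_exp]; simp [hc_def]
  have hexpm1 : ∀ t : ℝ, ‖Complex.exp (-(c * (t : ℂ)))‖ = 1 := by
    intro t; rw [Complex.norm_exp]; simp [hc_def]
  have hge : Integrable (fun t : ℝ => Complex.exp (c * (t : ℂ)) * ((q t : ℂ) * m t)) :=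
    hg.bdd_mul
      ((Complex.continuous_exp.comp
        (continuous_const.mul Complex.continuous_ofReal)).aestronglyMeasurable)
      (Filter.Eventually.of_forall fun t => (hexp1 t).le)
  have hgc : Integrable (fun t => conj ((q t : ℂ) * m t)) := myIntegrableConj hg
  have hgec : Integrable (fun t : ℝ => Complex.exp (-(c * (t : ℂ))) * conj ((q t : ℂ) * m t)) :=
    hgc.bdd_mul
      ((Complex.continuous_exp.comp
        ((continuous_const.mul Complex.continuous_ofReal).neg)).aestronglyMeasurable)
      (Filter.Eventually.of_forall fun t => (hexpm1 t).le)
  -- the two scattering integrals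
  set z1 : ℂ := ∫ t : ℝ, (q t : ℂ) * m t with hz1_def
  set z2 : ℂ := ∫ t : ℝ, Complex.exp (c * (t : ℂ)) * ((q t : ℂ) * m t) with hz2_def
  have hcz1 : ∫ t : ℝ, conj ((q t : ℂ) * m t) = conj z1 := by
    rw [hz1_def, ← integral_conj]
  have hcz2 : ∫ t : ℝ, Complex.exp (-(c * (t : ℂ))) * conj ((q t : ℂ) * m t) = conj z2 := by
    rw [hz2_def, ← integral_conj]
    congr 1
    funext t
    have harg : (starRingEnd ℂ) (Complex.exp (c * (t : ℂ)) * ((q t : ℂ) * m t))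
        = Complex.exp (-(c * (t : ℂ))) * conj ((q t : ℂ) * m t) := by
      rw [map_mul, ← Complex.exp_conj,
        show (starRingEnd ℂ) (c * (t : ℂ)) = -(c * (t : ℂ)) by
          rw [map_mul, hcc, Complex.conj_ofReal]; ring]
    exact harg.symm
  -- the kernel on the product space
  set Φ : ℝ × ℝ → ℂ := fun p =>
    D (lam : ℂ) (p.1 - p.2) * ((q p.1 : ℂ) * m p.1) * conj ((q p.2 : ℂ) * m p.2) with hPhi_def
  have hPhiInt : Integrable Φ (volume.prod volume) := by
    rw [hPhi_def]
    have hDsm : AEStronglyMeasurable (fun p : ℝ × ℝ => D (lam : ℂ) (p.1 - p.2))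
        (volume.prod volume) :=
      (hDmeas.comp (measurable_fst.sub measurable_snd)).aestronglyMeasurable
    have h1 : AEStronglyMeasurable (fun p : ℝ × ℝ => (q p.1 : ℂ) * m p.1)
        (volume.prod volume) := hgsm.comp_fst
    have h2 : AEStronglyMeasurable (fun p : ℝ × ℝ => conj ((q p.2 : ℂ) * m p.2))
        (volume.prod volume) :=
      Complex.continuous_conj.comp_aestronglyMeasurable hgsm.comp_snd
    have hdom : Integrable
        (fun p : ℝ × ℝ => |lam|⁻¹ * (‖(q p.1 : ℂ) * m p.1‖ * ‖(q p.2 : ℂ) * m p.2‖))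
        (volume.prod volume) := (hg.norm.mul_prod hg.norm).const_mul _
    refine hdom.mono' ((hDsm.mul h1).mul h2) ?_
    filter_upwards with p
    rw [norm_mul, norm_mul]
    have h3 : ‖conj ((q p.2 : ℂ) * m p.2)‖ = ‖(q p.2 : ℂ) * m p.2‖ := by simp
    rw [h3, ← mul_assoc]
    gcongr
    exact hDbd _
  have hPhi_t : ∀ t : ℝ, Integrable (fun s => Φ (s, t)) := by
    intro t
    simp only [hPhi_def]
    exact (hg.bdd_mul
      ((hDmeas.comp (measurable_id.sub_const t)).aestronglyMeasurable)
      (Filter.Eventually.of_forall fun s => hDbd _)).mul_const _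
  have hPhi_s : ∀ t : ℝ, Integrable (fun s => Φ (t, s)) := by
    intro t
    simp only [hPhi_def]
    refine hgc.bdd_mul (c := |lam|⁻¹ * ‖(q t : ℂ) * m t‖) ?_ (Filter.Eventually.of_forall ?_)
    · exact ((hDmeas.comp (measurable_const.sub measurable_id)).aestronglyMeasurable).mul_const _
    · intro s
      rw [norm_mul]
      exact mul_le_mul_of_nonneg_right (hDbd _) (norm_nonneg _)
  -- inner integral via the Jost equation
  have hinner : ∀ t : ℝ, (∫ s, Φ (s, t)) = (m t - 1) * conj ((q t : ℂ) * m t) := by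
    intro t
    have e1 : ∫ s, Φ (s, t)
        = (∫ s, D (lam : ℂ) (s - t) * ((q s : ℂ) * m s)) * conj ((q t : ℂ) * m t) := by
      simp only [hPhi_def]
      exact integral_mul_const _ _
    have e3 : ∫ s in Set.Ioi t, D (lam : ℂ) (s - t) * ((q s : ℂ) * m s)
        = ∫ s, D (lam : ℂ) (s - t) * ((q s : ℂ) * m s) :=
      setIntegral_eq_integral_of_forall_compl_eq_zero (fun s hs => by
        rw [hDnonpos s t (by simpa using hs), zero_mul])
    have e4 := heq t
    simp only [mul_assoc] at e4
    have e2 : ∫ s, D (lam : ℂ) (s - t) * ((q s : ℂ) * m s) = m t - 1 := by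
      rw [← e3, e4]; ring
    rw [e1, e2]
  -- Fubini bookkeeping
  have hII1 : Integrable (fun t : ℝ => ∫ s, Φ (s, t)) := hPhiInt.integral_prod_right
  have hII2 : Integrable (fun t : ℝ => ∫ s, Φ (t, s)) := hPhiInt.integral_prod_left
  have hswap : (∫ t : ℝ, ∫ s : ℝ, Φ (t, s)) = ∫ t : ℝ, ∫ s : ℝ, Φ (s, t) :=
    integral_integral_swap (f := fun a b => Φ (a, b)) hPhiInt
  set J : ℂ := ∫ t : ℝ, ∫ s : ℝ, Φ (s, t) with hJ_def
  -- pointwise kernel identity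
  have hKpt : ∀ s t : ℝ,
      ((q s : ℂ) * m s) * conj ((q t : ℂ) * m t)
          * (1 - Complex.exp (c * ((s : ℂ) - (t : ℂ))))
        = -c * Φ (s, t) + conj (-c * Φ (t, s)) := by
    intro s t
    simp only [hPhi_def]
    rcases lt_trichotomy t s with h | h | h
    · rw [hDpos s t h, hDnonpos t s h.le]
      simp only [zero_mul, mul_zero, map_zero, add_zero]
      rw [div_eq_mul_inv]
      generalize Complex.exp (c * ((s : ℂ) - t)) = E
      linear_combination (((q s : ℂ) * m s * conj ((q t : ℂ) * m t)) * (E - 1)) *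
        mul_inv_cancel₀ hc
    · subst h
      rw [hDnonpos t t le_rfl]
      simp
    · rw [hDpos t s h, hDnonpos s t h.le]
      simp only [map_mul, map_sub, map_div₀, map_one, hcc, map_neg, ← Complex.exp_conj,
        Complex.conj_conj, Complex.conj_ofReal]
      rw [show Complex.exp (-c * ((t : ℂ) - s)) = Complex.exp (c * ((s : ℂ) - t)) by
        congr 1; ring]
      generalize Complex.exp (c * ((s : ℂ) - t)) = E
      rw [div_eq_mul_inv, inv_neg]
      linear_combination (((q s : ℂ) * m s) * ((q t : ℂ) * conj (m t)) * (E - 1)) *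
        mul_inv_cancel₀ hc
  -- step 1 : inner integral of K
  have step1 : ∀ t : ℝ,
      (∫ s, ((q s : ℂ) * m s) * conj ((q t : ℂ) * m t)
          * (1 - Complex.exp (c * ((s : ℂ) - (t : ℂ)))))
        = z1 * conj ((q t : ℂ) * m t)
          - z2 * (Complex.exp (-(c * (t : ℂ))) * conj ((q t : ℂ) * m t)) := by
    intro t
    have expand : (fun s : ℝ => ((q s : ℂ) * m s) * conj ((q t : ℂ) * m t)
          * (1 - Complex.exp (c * ((s : ℂ) - (t : ℂ)))))
        = fun s : ℝ => ((q s : ℂ) * m s) * conj ((q t : ℂ) * m t)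
          - (Complex.exp (c * (s : ℂ)) * ((q s : ℂ) * m s))
              * (Complex.exp (-(c * (t : ℂ))) * conj ((q t : ℂ) * m t)) := by
      funext s
      rw [show c * ((s : ℂ) - (t : ℂ)) = c * (s : ℂ) + -(c * (t : ℂ)) by ring,
        Complex.exp_add]
      ring
    rw [expand, integral_sub (hg.mul_const _) (hge.mul_const _),
      integral_mul_const, integral_mul_const]
  -- step 4 : inner integral of the Φ-decomposition
  have step4 : ∀ t : ℝ,
      (∫ s, (-c * Φ (s, t) + conj (-c * Φ (t, s))))
        = -c * (∫ s, Φ (s, t)) + conj (-c * ∫ s, Φ (t, s)) := by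
    intro t
    rw [integral_add ((hPhi_t t).const_mul _) (myIntegrableConj ((hPhi_s t).const_mul _)),
      integral_const_mul, integral_conj, integral_const_mul]
  -- pointwise bridge between the two inner integrals
  have h1 : ∀ t : ℝ,
      z1 * conj ((q t : ℂ) * m t)
          - z2 * (Complex.exp (-(c * (t : ℂ))) * conj ((q t : ℂ) * m t))
        = -c * (∫ s, Φ (s, t)) + conj (-c * ∫ s, Φ (t, s)) := by
    intro t
    rw [← step1 t,
      show (fun s : ℝ => ((q s : ℂ) * m s) * conj ((q t : ℂ) * m t)
            * (1 - Complex.exp (c * ((s : ℂ) - (t : ℂ)))))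
          = fun s : ℝ => -c * Φ (s, t) + conj (-c * Φ (t, s)) from
        funext fun s => hKpt s t]
    exact step4 t
  -- step 2 and 5 : putting the outer integral together
  have hBig : z1 * conj z1 - z2 * conj z2 = -c * J + conj (-c * J) := by
    have step2 : ∫ t : ℝ, (z1 * conj ((q t : ℂ) * m t)
          - z2 * (Complex.exp (-(c * (t : ℂ))) * conj ((q t : ℂ) * m t)))
        = z1 * conj z1 - z2 * conj z2 := by
      rw [integral_sub (hgc.const_mul z1) (hgec.const_mul z2),
        integral_const_mul, integral_const_mul, hcz1, hcz2]
    rw [← step2]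
    rw [show (fun t : ℝ => z1 * conj ((q t : ℂ) * m t)
          - z2 * (Complex.exp (-(c * (t : ℂ))) * conj ((q t : ℂ) * m t)))
        = fun t : ℝ => -c * (∫ s, Φ (s, t)) + conj (-c * ∫ s, Φ (t, s)) from
      funext fun t => h1 t]
    rw [integral_add (hII1.const_mul _) (myIntegrableConj (hII2.const_mul _)),
      integral_const_mul, integral_conj, integral_const_mul, hswap, ← hJ_def]
  -- value of J
  have hmul : Integrable (fun t => q t * Complex.normSq (m t)) := by
    refine (hq.bdd_mul (c := C * C) ((Complex.continuous_normSq.comp_aestronglyMeasurable hmae))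
      (Filter.Eventually.of_forall fun t => ?_)).congr
      (Filter.Eventually.of_forall fun t => mul_comm _ _)
    have h0 : Complex.normSq (m t) = ‖m t‖ ^ 2 := by
      rw [← Complex.sq_norm]
    rw [Real.norm_eq_abs, _root_.abs_of_nonneg (Complex.normSq_nonneg _), h0, pow_two]
    exact mul_le_mul (hC t) (hC t) (norm_nonneg _) (le_trans (norm_nonneg _) (hC t))
  have hJval : J = ((∫ t : ℝ, q t * Complex.normSq (m t) : ℝ) : ℂ) - conj z1 := by
    have hJ1 : J = ∫ t : ℝ, (m t - 1) * conj ((q t : ℂ) * m t) := by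
      rw [hJ_def]; simp only [hinner]
    have hprod : ∀ t : ℝ, m t * conj ((q t : ℂ) * m t)
        = ((q t * Complex.normSq (m t) : ℝ) : ℂ) := by
      intro t
      rw [map_mul, Complex.conj_ofReal, Complex.ofReal_mul,
        show m t * ((q t : ℂ) * conj (m t)) = (q t : ℂ) * (m t * conj (m t)) by ring,
        Complex.mul_conj]
    have hsplit : (fun t : ℝ => (m t - 1) * conj ((q t : ℂ) * m t))
        = fun t : ℝ => ((q t * Complex.normSq (m t) : ℝ) : ℂ) - conj ((q t : ℂ) * m t) := by
      funext t
      rw [sub_mul, one_mul, hprod t]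
    have hmulC : Integrable (fun t : ℝ => ((q t * Complex.normSq (m t) : ℝ) : ℂ)) volume :=
      hmul.ofReal
    have hofReal : ∫ t : ℝ, ((q t * Complex.normSq (m t) : ℝ) : ℂ)
        = ((∫ t : ℝ, q t * Complex.normSq (m t) : ℝ) : ℂ) := integral_ofReal
    rw [hJ1, hsplit, integral_sub hmulC hgc, hcz1, hofReal]
  -- the key algebraic identity
  have hstar : z1 * conj z1 - z2 * conj z2 = c * (conj z1 - z1) := by
    rw [hBig, hJval]
    simp only [map_neg, map_mul, map_sub, hcc, Complex.conj_conj, Complex.conj_ofReal]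
    ring
  -- rewrite the goal in terms of z1, z2
  rw [show (fun t : ℝ => Complex.exp (c * (t : ℂ)) * (q t : ℂ) * m t)
      = fun t : ℝ => Complex.exp (c * (t : ℂ)) * ((q t : ℂ) * m t) from
    funext fun t => mul_assoc _ _ _, ← hz2_def]
  clear_value c z1 z2
  have hinv : c * c⁻¹ = 1 := mul_inv_cancel₀ hc
  have hX : (1 - c⁻¹ * z1) * conj (1 - c⁻¹ * z1) - (c⁻¹ * z2) * conj (c⁻¹ * z2) = 1 := by
    simp only [map_sub, map_mul, map_one, map_inv₀, hcc, inv_neg]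
    linear_combination (-(c⁻¹ * c⁻¹)) * hstar + (-(c⁻¹) * (conj z1 - z1)) * hinv
  rw [Complex.mul_conj, Complex.mul_conj] at hX
  rw [Complex.sq_norm, Complex.sq_norm]
  exact_mod_cast hX
end

section
/- Let q ∈ L¹(ℝ) be complex-valued. For each λ in the open upper half-plane ℂ₊ let m_λ : ℝ → ℂ be the unique bounded solution of the Jost integral equation for q and λ, and set a(λ) := 1 − (2iλ)^{-1} ∫_ℝ q(t) m_λ(t) dt. Then the function λ ↦ a(λ) is holomorphic (complex differentiable) on ℂ₊. -/
open MeasureTheory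

namespace JostAux

open Set Filter Topology

variable {q : ℝ → ℂ}



noncomputable def Q (q : ℝ → ℂ) (x : ℝ) : ℝ := ∫ t in Set.Ioi x, ‖q t‖

lemma Q_nonneg (q : ℝ → ℂ) (x : ℝ) : 0 ≤ Q q x :=
  setIntegral_nonneg measurableSet_Ioi (fun _ _ => norm_nonneg _)

lemma Q_anti (hq : Integrable q) : Antitone (Q q) := by
  intro x y hxy
  exact setIntegral_mono_set hq.norm.integrableOn
    (Eventually.of_forall fun t => norm_nonneg _)
    (HasSubset.Subset.eventuallyLE (Set.Ioi_subset_Ioi hxy))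

lemma Q_le (hq : Integrable q) (x : ℝ) : Q q x ≤ ∫ t, ‖q t‖ := by
  have := setIntegral_mono_set hq.norm.integrableOn
    (Eventually.of_forall fun t => norm_nonneg _)
    (HasSubset.Subset.eventuallyLE (Set.subset_univ (Set.Ioi x)))
  rwa [setIntegral_univ] at this

lemma Q_sub (hq : Integrable q) {x y : ℝ} (hxy : x ≤ y) :
    Q q x - Q q y = ∫ t in Set.Ioc x y, ‖q t‖ := by
  have : Q q x = (∫ t in Set.Ioc x y, ‖q t‖) + Q q y := by
    rw [Q, ← Set.Ioc_union_Ioi_eq_Ioi hxy,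
      setIntegral_union (Set.Ioc_disjoint_Ioi le_rfl) measurableSet_Ioi
        hq.norm.integrableOn hq.norm.integrableOn]
    rfl
  linarith

lemma ae_ne (x₀ : ℝ) : ∀ᵐ t : ℝ, t ≠ x₀ := by
  rw [ae_iff]
  simpa using measure_singleton (α := ℝ) x₀

lemma Q_indicator (q : ℝ → ℂ) (x : ℝ) :
    Q q x = ∫ t, Set.indicator (Set.Ioi x) (fun t => ‖q t‖) t := by
  rw [Q, ← integral_indicator measurableSet_Ioi]

lemma indicator_norm_le (q : ℝ → ℂ) (s : Set ℝ) (t : ℝ) :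
    ‖Set.indicator s (fun t => ‖q t‖) t‖ ≤ ‖q t‖ := by
  rw [Real.norm_eq_abs, _root_.abs_of_nonneg (Set.indicator_nonneg (fun _ _ => norm_nonneg _) _)]
  exact Set.indicator_le_self' (fun _ _ => norm_nonneg _) t

lemma Q_continuous (hq : Integrable q) : Continuous (Q q) := by
  rw [continuous_iff_continuousAt]
  intro x₀
  have : Tendsto (fun x => ∫ t, Set.indicator (Set.Ioi x) (fun t => ‖q t‖) t)
      (𝓝 x₀) (𝓝 (∫ t, Set.indicator (Set.Ioi x₀) (fun t => ‖q t‖) t)) := by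
    apply tendsto_integral_filter_of_dominated_convergence (fun t => ‖q t‖)
    · exact Eventually.of_forall fun x =>
        (hq.norm.aestronglyMeasurable.indicator measurableSet_Ioi)
    · exact Eventually.of_forall fun x => Eventually.of_forall fun t => indicator_norm_le q _ t
    · exact hq.norm
    · filter_upwards [ae_ne x₀] with t ht
      have : ∀ᶠ x in 𝓝 x₀, Set.indicator (Set.Ioi x) (fun t => ‖q t‖) t
          = Set.indicator (Set.Ioi x₀) (fun t => ‖q t‖) t := by
        rcases lt_or_gt_of_ne ht with h | h
        · filter_upwards [eventually_gt_nhds h] with x hx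
          rw [Set.indicator_of_notMem (by simpa using hx.le),
            Set.indicator_of_notMem (by simpa using (not_lt.2 (le_of_lt h)) )]
        · filter_upwards [eventually_lt_nhds h] with x hx
          rw [Set.indicator_of_mem (by simpa using hx), Set.indicator_of_mem (by simpa using h)]
      exact Tendsto.congr' (this.mono fun _ h => h.symm) tendsto_const_nhds
  simpa only [ContinuousAt, ← Q_indicator] using this

lemma Q_tendsto (hq : Integrable q) : Tendsto (Q q) atTop (𝓝 0) := by
  have : Tendsto (fun x => ∫ t, Set.indicator (Set.Ioi x) (fun t => ‖q t‖) t)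
      atTop (𝓝 (∫ _ : ℝ, (0:ℝ))) := by
    apply tendsto_integral_filter_of_dominated_convergence (fun t => ‖q t‖)
    · exact Eventually.of_forall fun x =>
        (hq.norm.aestronglyMeasurable.indicator measurableSet_Ioi)
    · exact Eventually.of_forall fun x => Eventually.of_forall fun t => indicator_norm_le q _ t
    · exact hq.norm
    · refine Eventually.of_forall fun t => ?_
      have : ∀ᶠ x in atTop, Set.indicator (Set.Ioi x) (fun t => ‖q t‖) t = 0 := by
        filter_upwards [eventually_ge_atTop t] with x hx
        exact Set.indicator_of_notMem (by simpa using hx) _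
      exact Tendsto.congr' (this.mono fun _ h => h.symm) tendsto_const_nhds
  simp only [integral_zero] at this
  refine Tendsto.congr (fun x => (Q_indicator q x).symm) this

lemma pow_succ_sub_ge (k : ℕ) {a b : ℝ} (hb : 0 ≤ b) (hba : b ≤ a) :
    (k + 1 : ℝ) * b ^ k * (a - b) ≤ a ^ (k + 1) - b ^ (k + 1) := by
  induction k with
  | zero => simp
  | succ k ih =>
    have ha : 0 ≤ a := hb.trans hba
    have h1 : a ^ (k + 1 + 1) - b ^ (k + 1 + 1)
        = a * (a ^ (k + 1) - b ^ (k + 1)) + (a - b) * b ^ (k + 1) := by ring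
    have h2 : a * ((k + 1 : ℝ) * b ^ k * (a - b)) ≤ a * (a ^ (k + 1) - b ^ (k + 1)) :=
      mul_le_mul_of_nonneg_left ih ha
    have h3 : (k + 1 : ℝ) * b ^ (k + 1) * (a - b) ≤ a * ((k + 1 : ℝ) * b ^ k * (a - b)) := by
      have : b * ((k + 1 : ℝ) * b ^ k * (a - b)) ≤ a * ((k + 1 : ℝ) * b ^ k * (a - b)) := by
        exact mul_le_mul_of_nonneg_right hba
          (mul_nonneg (mul_nonneg (by positivity) (pow_nonneg hb k)) (sub_nonneg.2 hba))
      calc (k + 1 : ℝ) * b ^ (k + 1) * (a - b) = b * ((k + 1 : ℝ) * b ^ k * (a - b)) := by ring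
        _ ≤ _ := this
    push_cast
    nlinarith [h1, h2, h3]

lemma intQk (hq : Integrable q) (k : ℕ) :
    Integrable (fun t => Q q t ^ k * ‖q t‖) := by
  apply Integrable.bdd_mul (f := fun t => Q q t ^ k) (c := (∫ t, ‖q t‖) ^ k) hq.norm ((Q_continuous hq).pow k).aestronglyMeasurable
  refine Eventually.of_forall fun x => ?_
  rw [Real.norm_eq_abs, abs_of_nonneg (pow_nonneg (Q_nonneg q x) k)]
  exact pow_le_pow_left₀ (Q_nonneg q x) (Q_le hq x) k

lemma piece_bound_Ioi (hq : Integrable q) (k : ℕ) (y : ℝ) :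
    ∫ t in Set.Ioi y, Q q t ^ k * ‖q t‖ ≤ Q q y ^ k * Q q y := by
  have h1 : ∫ t in Set.Ioi y, Q q t ^ k * ‖q t‖ ≤ ∫ t in Set.Ioi y, Q q y ^ k * ‖q t‖ := by
    apply setIntegral_mono_on (intQk hq k).integrableOn
      (hq.norm.integrableOn.const_mul _) measurableSet_Ioi
    intro t ht
    exact mul_le_mul_of_nonneg_right
      (pow_le_pow_left₀ (Q_nonneg q t) (Q_anti hq (le_of_lt ht)) k) (norm_nonneg _)
  rwa [integral_const_mul] at h1

lemma piece_bound_Ioc (hq : Integrable q) (k : ℕ) {y z : ℝ} (hyz : y ≤ z) :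
    ∫ t in Set.Ioc y z, Q q t ^ k * ‖q t‖ ≤ Q q y ^ k * (Q q y - Q q z) := by
  have h1 : ∫ t in Set.Ioc y z, Q q t ^ k * ‖q t‖ ≤ ∫ t in Set.Ioc y z, Q q y ^ k * ‖q t‖ := by
    apply setIntegral_mono_on (intQk hq k).integrableOn
      (hq.norm.integrableOn.const_mul _) measurableSet_Ioc
    intro t ht
    exact mul_le_mul_of_nonneg_right
      (pow_le_pow_left₀ (Q_nonneg q t) (Q_anti hq (le_of_lt ht.1)) k) (norm_nonneg _)
  rw [Q_sub hq hyz]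
  rwa [integral_const_mul] at h1

lemma split_Ioi (hq : Integrable q) (k : ℕ) {y z : ℝ} (hyz : y ≤ z) :
    ∫ t in Set.Ioi y, Q q t ^ k * ‖q t‖
      = (∫ t in Set.Ioc y z, Q q t ^ k * ‖q t‖) + ∫ t in Set.Ioi z, Q q t ^ k * ‖q t‖ := by
  rw [← Set.Ioc_union_Ioi_eq_Ioi hyz,
    setIntegral_union (Set.Ioc_disjoint_Ioi le_rfl) measurableSet_Ioi
      (intQk hq k).integrableOn (intQk hq k).integrableOn]

/-- key "factorial-gain" estimate -/
lemma keyQ (hq : Integrable q) (k : ℕ) (x : ℝ) :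
    ∫ t in Set.Ioi x, Q q t ^ k * ‖q t‖ ≤ Q q x ^ (k + 1) / (k + 1) := by
  -- main claim by induction on j
  have claim : ∀ (η : ℝ), 0 < η → ∀ j : ℕ, ∀ y : ℝ, Q q y ≤ j * η →
      ∫ t in Set.Ioi y, Q q t ^ k * ‖q t‖
        ≤ Q q y ^ (k + 1) / (k + 1) + η * Q q y ^ k := by
    intro η hη j
    induction j with
    | zero =>
      intro y hy
      have h0 : Q q y = 0 := le_antisymm (by simpa using hy) (Q_nonneg q y)
      have := piece_bound_Ioi hq k y
      rw [h0] at this ⊢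
      simp only [zero_mul, mul_zero] at this
      have hk : (0:ℝ) ^ (k+1) = 0 := by simp
      rw [hk, zero_div]
      have hnn : 0 ≤ η * (0:ℝ) ^ k := by positivity
      linarith
    | succ j ih =>
      intro y hy
      by_cases hsmall : Q q y ≤ η
      · -- direct bound
        have h1 := piece_bound_Ioi hq k y
        have h2 : Q q y ^ k * Q q y ≤ η * Q q y ^ k := by
          rw [mul_comm]
          exact mul_le_mul_of_nonneg_right hsmall (pow_nonneg (Q_nonneg q y) k)
        have h3 : 0 ≤ Q q y ^ (k+1) / (k+1) := div_nonneg (pow_nonneg (Q_nonneg q y) _) (by positivity)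
        linarith
      · push_neg at hsmall
        -- find z ≥ y with Q z = Q y - η
        obtain ⟨b, hb, hQb⟩ : ∃ b, y ≤ b ∧ Q q b ≤ Q q y - η := by
          have hev : ∀ᶠ b in atTop, Q q b ≤ Q q y - η ∧ y ≤ b := by
            filter_upwards [(Q_tendsto hq).eventually_le_const
                (show (0:ℝ) < Q q y - η by linarith), eventually_ge_atTop y] with b h1 h2
            exact ⟨by linarith, h2⟩
          obtain ⟨b, hb⟩ := hev.exists
          exact ⟨b, hb.2, hb.1⟩
        obtain ⟨z, hz, hQz⟩ : ∃ z ∈ Set.Icc y b, Q q z = Q q y - η := by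
          have := intermediate_value_Icc' hb ((Q_continuous hq).continuousOn (s := Set.Icc y b))
          have hmem : Q q y - η ∈ Set.Icc (Q q b) (Q q y) := ⟨hQb, by linarith⟩
          obtain ⟨z, hz1, hz2⟩ := this hmem
          exact ⟨z, hz1, hz2⟩
        have hyz : y ≤ z := hz.1
        have hQzj : Q q z ≤ j * η := by
          rw [hQz]
          push_cast at hy ⊢
          linarith
        have hIz := ih z hQzj
        have hsplit := split_Ioi hq k hyz
        have hpiece := piece_bound_Ioc hq k hyz
        have hQyQz : Q q y - Q q z = η := by rw [hQz]; ring
        have hpow := pow_succ_sub_ge k (Q_nonneg q z) (by rw [hQz]; linarith : Q q z ≤ Q q y)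
        rw [hQyQz] at hpow hpiece
        -- combine
        have hQznn := Q_nonneg q z
        have hQynn := Q_nonneg q y
        have hkpos : (0:ℝ) < k + 1 := by positivity
        rw [hsplit]
        have hmono : Q q z ^ k ≤ Q q y ^ k :=
          pow_le_pow_left₀ hQznn (by rw [hQz]; linarith) k
        -- goal: Ioc piece + Ioi z piece ≤ Qy^{k+1}/(k+1) + η Qy^k
        have key : Q q z ^ (k+1) / (k+1) + η * Q q z ^ k ≤ Q q y ^ (k+1) / (k+1) := by
          rw [div_add' _ _ _ (ne_of_gt hkpos), div_le_div_iff₀ hkpos hkpos]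
          push_cast at hpow ⊢
          nlinarith [hpow]
        calc (∫ t in Set.Ioc y z, Q q t ^ k * ‖q t‖) + ∫ t in Set.Ioi z, Q q t ^ k * ‖q t‖
            ≤ Q q y ^ k * η + (Q q z ^ (k+1) / (k+1) + η * Q q z ^ k) := by
              exact add_le_add hpiece hIz
          _ ≤ Q q y ^ k * η + Q q y ^ (k+1) / (k+1) := by linarith
          _ = Q q y ^ (k+1) / (k+1) + η * Q q y ^ k := by ring
  -- conclude
  refine le_of_forall_pos_le_add fun ε hε => ?_
  set A := Q q x with hA
  have hAnn : 0 ≤ A := Q_nonneg q x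
  set η : ℝ := ε / (A ^ k + 1) with hηdef
  have hη : 0 < η := by positivity
  obtain ⟨j, hj⟩ := exists_nat_ge (A / η)
  have hjη : A ≤ j * η := by
    rw [div_le_iff₀ hη] at hj
    exact hj
  have := claim η hη j x hjη
  have herr : η * A ^ k ≤ ε := by
    rw [hηdef]
    rw [div_mul_eq_mul_div, div_le_iff₀ (by positivity)]
    nlinarith [pow_nonneg hAnn k]
  linarith




lemma Dmax (lam : ℂ) (y : ℝ) :
    D lam y = (Complex.exp (2 * Complex.I * lam * (max y 0 : ℝ)) - 1) / (2 * Complex.I * lam) := by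
  unfold D
  rcases lt_or_ge 0 y with h | h
  · rw [if_pos h, max_eq_left h.le]
  · rw [if_neg (not_lt.2 h), max_eq_right h]
    simp

lemma D_zero (lam : ℂ) {y : ℝ} (h : y ≤ 0) : D lam y = 0 := by
  unfold D; rw [if_neg (not_lt.2 h)]

lemma two_I_lam_ne {lam : ℂ} (h : lam ≠ 0) : 2 * Complex.I * lam ≠ 0 := by
  simp [Complex.I_ne_zero, h]

lemma im_ne {lam : ℂ} (h : 0 < lam.im) : lam ≠ 0 := by
  intro h0; rw [h0] at h; simp at h

lemma norm_two_I_lam (lam : ℂ) : ‖2 * Complex.I * lam‖ = 2 * ‖lam‖ := by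
  simp [norm_mul]

lemma im_le_norm (lam : ℂ) : lam.im ≤ ‖lam‖ :=
  (le_abs_self _).trans (Complex.abs_im_le_norm lam)

lemma exp_re_calc (lam : ℂ) (u : ℝ) :
    ‖Complex.exp (2 * Complex.I * lam * (u : ℝ))‖ = Real.exp (-2 * lam.im * u) := by
  rw [Complex.norm_exp]
  congr 1
  simp [Complex.mul_re, Complex.mul_im]

lemma norm_exp_le_one {lam : ℂ} (h : 0 ≤ lam.im) {u : ℝ} (hu : 0 ≤ u) :
    ‖Complex.exp (2 * Complex.I * lam * (u : ℝ))‖ ≤ 1 := by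
  rw [exp_re_calc, Real.exp_le_one_iff]
  nlinarith

lemma D_bound {lam : ℂ} (h : 0 < lam.im) (y : ℝ) : ‖D lam y‖ ≤ 1 / lam.im := by
  rw [Dmax, norm_div, norm_two_I_lam]
  have h1 : ‖Complex.exp (2 * Complex.I * lam * ((max y 0 : ℝ) : ℂ)) - 1‖ ≤ 2 := by
    refine (norm_sub_le _ _).trans ?_
    have := norm_exp_le_one h.le (le_max_right y 0)
    simp only [norm_one]
    linarith
  have h2 : 2 * lam.im ≤ 2 * ‖lam‖ := by linarith [im_le_norm lam]
  calc ‖Complex.exp (2 * Complex.I * lam * ((max y 0 : ℝ) : ℂ)) - 1‖ / (2 * ‖lam‖)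
      ≤ 2 / (2 * lam.im) := by
        apply div_le_div₀ (by norm_num) h1 (by linarith) h2
    _ = 1 / lam.im := by field_simp


/-- derivative of `D · y` -/
noncomputable def Dd (lam : ℂ) (y : ℝ) : ℂ :=
  (Complex.exp (2 * Complex.I * lam * (max y 0 : ℝ)) * (2 * Complex.I * (max y 0 : ℝ))
      * (2 * Complex.I * lam)
    - (Complex.exp (2 * Complex.I * lam * (max y 0 : ℝ)) - 1) * (2 * Complex.I))
    / (2 * Complex.I * lam) ^ 2

lemma hasDerivAt_D {lam : ℂ} (h : lam ≠ 0) (y : ℝ) :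
    HasDerivAt (fun l => D l y) (Dd lam y) lam := by
  have hfun : (fun l => D l y)
      = fun l => (Complex.exp (2 * Complex.I * l * (max y 0 : ℝ)) - 1) / (2 * Complex.I * l) :=
    funext fun l => Dmax l y
  rw [hfun]
  have hnum : HasDerivAt
      (fun l : ℂ => Complex.exp (2 * Complex.I * l * (max y 0 : ℝ)) - 1)
      (Complex.exp (2 * Complex.I * lam * (max y 0 : ℝ)) * (2 * Complex.I * (max y 0 : ℝ))) lam := by
    have harg : HasDerivAt (fun l : ℂ => 2 * Complex.I * l * ((max y 0 : ℝ) : ℂ))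
        (2 * Complex.I * ((max y 0 : ℝ) : ℂ)) lam := by
      have := ((hasDerivAt_id lam).const_mul (2 * Complex.I)).mul_const ((max y 0 : ℝ) : ℂ)
      simpa [mul_comm, mul_assoc, mul_left_comm] using this
    exact (harg.cexp.sub_const 1)
  have hden : HasDerivAt (fun l : ℂ => 2 * Complex.I * l) (2 * Complex.I) lam := by
    simpa using (hasDerivAt_id lam).const_mul (2 * Complex.I)
  have := hnum.fun_div hden (two_I_lam_ne h)
  simpa [Dd] using this

lemma Dd_bound {lam : ℂ} (h : 0 < lam.im) (y : ℝ) : ‖Dd lam y‖ ≤ 2 / lam.im ^ 2 := by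
  set u : ℝ := max y 0 with hu
  have hu0 : 0 ≤ u := le_max_right y 0
  set r : ℝ := ‖lam‖ with hr
  have hsr : lam.im ≤ r := im_le_norm lam
  have hrpos : 0 < r := lt_of_lt_of_le h hsr
  -- bound first summand of the numerator
  have hterm1 : ‖Complex.exp (2 * Complex.I * lam * (u : ℝ)) * (2 * Complex.I * (u : ℝ))‖
      ≤ 1 / lam.im := by
    rw [norm_mul, exp_re_calc]
    have : ‖2 * Complex.I * (u : ℝ)‖ = 2 * u := by
      simp [norm_mul, abs_of_nonneg hu0]
    rw [this]
    -- `e^{-2su} * 2u ≤ 1/s` since `2su·e^{-2su} ≤ 1`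
    have key : 2 * lam.im * u * Real.exp (-2 * lam.im * u) ≤ 1 := by
      have h1 : 2 * lam.im * u ≤ Real.exp (2 * lam.im * u) := by
        have := Real.add_one_le_exp (2 * lam.im * u)
        linarith
      have h2 : Real.exp (-2 * lam.im * u) = (Real.exp (2 * lam.im * u))⁻¹ := by
        rw [← Real.exp_neg]; ring_nf
      rw [h2]
      rw [mul_inv_le_iff₀ (Real.exp_pos _)]
      linarith
    rw [le_div_iff₀ h]
    calc Real.exp (-2 * lam.im * u) * (2 * u) * lam.im
        = 2 * lam.im * u * Real.exp (-2 * lam.im * u) := by ring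
      _ ≤ 1 := key
  have hterm2 : ‖Complex.exp (2 * Complex.I * lam * (u : ℝ)) - 1‖ * ‖(2 : ℂ) * Complex.I‖ ≤ 4 := by
    have h1 : ‖Complex.exp (2 * Complex.I * lam * (u : ℝ)) - 1‖ ≤ 2 := by
      refine (norm_sub_le _ _).trans ?_
      have := norm_exp_le_one h.le hu0
      simp only [norm_one]; linarith
    have h2 : ‖(2 : ℂ) * Complex.I‖ = 2 := by simp
    rw [h2]; linarith
  have hnum : ‖Complex.exp (2 * Complex.I * lam * (u : ℝ)) * (2 * Complex.I * (u : ℝ))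
      * (2 * Complex.I * lam)
      - (Complex.exp (2 * Complex.I * lam * (u : ℝ)) - 1) * (2 * Complex.I)‖
      ≤ (1 / lam.im) * (2 * r) + 4 := by
    refine (norm_sub_le _ _).trans ?_
    have h1 : ‖Complex.exp (2 * Complex.I * lam * (u : ℝ)) * (2 * Complex.I * (u : ℝ))
        * (2 * Complex.I * lam)‖ ≤ (1 / lam.im) * (2 * r) := by
      rw [norm_mul, norm_two_I_lam]
      exact mul_le_mul_of_nonneg_right hterm1 (by positivity)
    have h2 := hterm2
    rw [← norm_mul] at h2
    linarith
  have hden : ‖((2 : ℂ) * Complex.I * lam) ^ 2‖ = 4 * r ^ 2 := by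
    rw [norm_pow, norm_two_I_lam]; ring
  rw [Dd, norm_div, hden]
  rw [div_le_div_iff₀ (by positivity) (by positivity)]
  have hfinal : ((1 / lam.im) * (2 * r) + 4) * lam.im ^ 2 ≤ 2 * (4 * r ^ 2) := by
    have e1 : ((1 / lam.im) * (2 * r) + 4) * lam.im ^ 2
        = 2 * r * lam.im + 4 * lam.im ^ 2 := by field_simp
    rw [e1]
    nlinarith
  calc ‖_‖ * lam.im ^ 2 ≤ ((1 / lam.im) * (2 * r) + 4) * lam.im ^ 2 := by
        exact mul_le_mul_of_nonneg_right hnum (by positivity)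
    _ ≤ 2 * (4 * r ^ 2) := hfinal

lemma D_contY (lam : ℂ) : Continuous fun y => D lam y := by
  have : (fun y => D lam y)
      = fun y => (Complex.exp (2 * Complex.I * lam * (max y 0 : ℝ)) - 1) / (2 * Complex.I * lam) :=
    funext fun y => Dmax lam y
  rw [this]
  fun_prop

lemma Dd_contY (lam : ℂ) : Continuous fun y => Dd lam y := by
  unfold Dd
  fun_prop




noncomputable def uu (q : ℝ → ℂ) : ℕ → ℂ → ℝ → ℂ
  | 0 => fun _ _ => 1
  | n+1 => fun lam x => ∫ t, D lam (t - x) * (q t * uu q n lam t)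

noncomputable def vv (q : ℝ → ℂ) : ℕ → ℂ → ℝ → ℂ
  | 0 => fun _ _ => 0
  | n+1 => fun lam x => ∫ t,
      (Dd lam (t - x) * (q t * uu q n lam t) + D lam (t - x) * (q t * vv q n lam t))

lemma CK_nonneg {K : ℝ → ℂ} {CK : ℝ} (hCK : ∀ y, ‖K y‖ ≤ CK) : 0 ≤ CK :=
  (norm_nonneg _).trans (hCK 0)

lemma ker_pointwise_bound {f K : ℝ → ℂ} {B CK : ℝ} (hB : ∀ t, ‖f t‖ ≤ B)
    (hCK : ∀ y, ‖K y‖ ≤ CK) (x t : ℝ) :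
    ‖K (t - x) * (q t * f t)‖ ≤ CK * B * ‖q t‖ := by
  have hB0 : 0 ≤ B := (norm_nonneg _).trans (hB 0)
  rw [norm_mul, norm_mul]
  calc ‖K (t - x)‖ * (‖q t‖ * ‖f t‖) ≤ CK * (‖q t‖ * B) := by
        apply mul_le_mul (hCK _) (mul_le_mul_of_nonneg_left (hB t) (norm_nonneg _))
          (by positivity) (CK_nonneg hCK)
    _ = CK * B * ‖q t‖ := by ring

lemma int_ker (hq : Integrable q) {f K : ℝ → ℂ} (hf : AEStronglyMeasurable f)
    {B : ℝ} (hB : ∀ t, ‖f t‖ ≤ B) (hK : Continuous K) {CK : ℝ} (hCK : ∀ y, ‖K y‖ ≤ CK)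
    (x : ℝ) : Integrable (fun t => K (t - x) * (q t * f t)) := by
  apply Integrable.mono' (hq.norm.const_mul (CK * B))
  · exact ((hK.comp (continuous_id.sub continuous_const)).aestronglyMeasurable.mul
      (hq.aestronglyMeasurable.mul hf))
  · exact Eventually.of_forall fun t => ker_pointwise_bound hB hCK x t

lemma cont_ker (hq : Integrable q) {f K : ℝ → ℂ} (hf : AEStronglyMeasurable f)
    {B : ℝ} (hB : ∀ t, ‖f t‖ ≤ B) (hK : Continuous K) {CK : ℝ} (hCK : ∀ y, ‖K y‖ ≤ CK) :
    Continuous fun x => ∫ t, K (t - x) * (q t * f t) := by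
  apply continuous_of_dominated (bound := fun t => CK * B * ‖q t‖)
  · intro x
    exact ((hK.comp (continuous_id.sub continuous_const)).aestronglyMeasurable.mul
      (hq.aestronglyMeasurable.mul hf))
  · exact fun x => Eventually.of_forall fun t => ker_pointwise_bound hB hCK x t
  · exact hq.norm.const_mul _
  · exact Eventually.of_forall fun t =>
      ((hK.comp (continuous_const.sub continuous_id)).mul continuous_const)

lemma oneDiv_im_le {lam : ℂ} {δ : ℝ} (hδ : 0 < δ) (hlam : δ < lam.im) :
    1 / lam.im ≤ 1 / δ := one_div_le_one_div_of_le hδ hlam.le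

lemma twoDiv_im_le {lam : ℂ} {δ : ℝ} (hδ : 0 < δ) (hlam : δ < lam.im) :
    2 / lam.im ^ 2 ≤ 2 / δ ^ 2 :=
  div_le_div_of_nonneg_left (by norm_num) (by positivity)
    (by nlinarith)

/-- The big induction. -/
lemma main_ind (hq : Integrable q) {δ : ℝ} (hδ : 0 < δ) : ∀ n : ℕ,
    (∀ lam : ℂ, δ < lam.im → Continuous (uu q n lam))
    ∧ (∀ lam : ℂ, δ < lam.im → ∀ x, ‖uu q n lam x‖ ≤ Q q x ^ n / (δ ^ n * n.factorial))
    ∧ (∀ lam : ℂ, δ < lam.im → Continuous (vv q n lam))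
    ∧ (∃ C : ℝ, 0 ≤ C ∧ ∀ lam : ℂ, δ < lam.im → ∀ x, ‖vv q n lam x‖ ≤ C)
    ∧ (∀ lam : ℂ, δ < lam.im → ∀ x, HasDerivAt (fun l => uu q n l x) (vv q n lam x) lam) := by
  intro n
  induction n with
  | zero =>
    refine ⟨fun _ _ => continuous_const, fun lam _ x => by simp [uu],
      fun _ _ => continuous_const, ⟨0, le_rfl, fun lam _ x => by simp [vv]⟩,
      fun lam _ x => by simpa [uu, vv] using hasDerivAt_const lam (1:ℂ)⟩
  | succ n ih =>
    obtain ⟨ihc, ihb, ihvc, ⟨C, hC0, ihvb⟩, ihd⟩ := ih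
    set Nq : ℝ := ∫ t, ‖q t‖ with hNq
    have hNq0 : 0 ≤ Nq := integral_nonneg fun t => norm_nonneg _
    set Bn : ℝ := Nq ^ n / (δ ^ n * n.factorial) with hBn
    have hBn0 : 0 ≤ Bn := by positivity
    have hub : ∀ lam : ℂ, δ < lam.im → ∀ x, ‖uu q n lam x‖ ≤ Bn := by
      intro lam hlam x
      refine (ihb lam hlam x).trans ?_
      have h1 : Q q x ^ n ≤ Nq ^ n := pow_le_pow_left₀ (Q_nonneg q x) (Q_le hq x) n
      rw [hBn]
      gcongr
    have hDb : ∀ lam : ℂ, δ < lam.im → ∀ y, ‖D lam y‖ ≤ 1 / δ := fun lam hlam y =>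
      (D_bound (hδ.trans hlam) y).trans (oneDiv_im_le hδ hlam)
    have hDdb : ∀ lam : ℂ, δ < lam.im → ∀ y, ‖Dd lam y‖ ≤ 2 / δ ^ 2 := fun lam hlam y =>
      (Dd_bound (hδ.trans hlam) y).trans (twoDiv_im_le hδ hlam)
    -- continuity of `uu (n+1)`
    have hcont : ∀ lam : ℂ, δ < lam.im → Continuous (uu q (n+1) lam) := by
      intro lam hlam
      exact cont_ker hq (ihc lam hlam).aestronglyMeasurable (hub lam hlam)
        (D_contY lam) (hDb lam hlam)
    -- bound on `uu (n+1)`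
    have hbound : ∀ lam : ℂ, δ < lam.im → ∀ x,
        ‖uu q (n+1) lam x‖ ≤ Q q x ^ (n+1) / (δ ^ (n+1) * (n+1).factorial) := by
      intro lam hlam x
      have hIntU := int_ker hq (ihc lam hlam).aestronglyMeasurable (hub lam hlam)
        (D_contY lam) (hDb lam hlam) x
      have step1 : ‖uu q (n+1) lam x‖ ≤ ∫ t, ‖D lam (t - x) * (q t * uu q n lam t)‖ :=
        norm_integral_le_integral_norm _
      have step2 : (∫ t, ‖D lam (t - x) * (q t * uu q n lam t)‖)
          = ∫ t in Set.Ioi x, ‖D lam (t - x) * (q t * uu q n lam t)‖ := by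
        symm
        apply setIntegral_eq_integral_of_forall_compl_eq_zero
        intro t ht
        have h1 : t - x ≤ 0 := by
          simp only [Set.mem_Ioi, not_lt] at ht
          linarith
        rw [D_zero lam h1, zero_mul, norm_zero]
      have step3 : (∫ t in Set.Ioi x, ‖D lam (t - x) * (q t * uu q n lam t)‖)
          ≤ ∫ t in Set.Ioi x, (1/(δ^(n+1) * n.factorial)) * (Q q t ^ n * ‖q t‖) := by
        apply setIntegral_mono_on hIntU.norm.integrableOn
          ((intQk hq n).const_mul _).integrableOn measurableSet_Ioi
        intro t _
        rw [norm_mul, norm_mul]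
        calc ‖D lam (t-x)‖ * (‖q t‖ * ‖uu q n lam t‖)
            ≤ (1/δ) * (‖q t‖ * (Q q t ^ n / (δ^n * n.factorial))) := by
              apply mul_le_mul (hDb lam hlam _)
                (mul_le_mul_of_nonneg_left (ihb lam hlam t) (norm_nonneg _))
                (by positivity) (by positivity)
          _ = (1/(δ^(n+1) * n.factorial)) * (Q q t ^ n * ‖q t‖) := by
              field_simp
              ring
      have step4 : (∫ t in Set.Ioi x, (1/(δ^(n+1) * n.factorial)) * (Q q t ^ n * ‖q t‖))
          ≤ (1/(δ^(n+1) * n.factorial)) * (Q q x ^ (n+1) / (n+1)) := by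
        rw [integral_const_mul]
        exact mul_le_mul_of_nonneg_left (keyQ hq n x) (by positivity)
      have final : (1/(δ^(n+1) * (n.factorial:ℝ))) * (Q q x ^ (n+1) / (n+1))
          = Q q x ^ (n+1) / (δ^(n+1) * (n+1).factorial) := by
        rw [Nat.factorial_succ]
        push_cast
        rw [div_mul_div_comm, one_mul]
        ring
      calc ‖uu q (n+1) lam x‖ ≤ _ := step1
        _ = _ := step2
        _ ≤ _ := step3
        _ ≤ _ := step4
        _ = _ := final
    -- continuity of `vv (n+1)`
    have hcontv : ∀ lam : ℂ, δ < lam.im → Continuous (vv q (n+1) lam) := by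
      intro lam hlam
      have : (vv q (n+1) lam) = fun x => ∫ t,
          (Dd lam (t - x) * (q t * uu q n lam t) + D lam (t - x) * (q t * vv q n lam t)) := rfl
      rw [this]
      apply continuous_of_dominated
        (bound := fun t => (2/δ^2 * Bn + (1/δ) * C) * ‖q t‖)
      · intro x
        exact (((Dd_contY lam).comp (continuous_id.sub continuous_const)).aestronglyMeasurable.mul
            (hq.aestronglyMeasurable.mul (ihc lam hlam).aestronglyMeasurable)).add
          (((D_contY lam).comp (continuous_id.sub continuous_const)).aestronglyMeasurable.mul
            (hq.aestronglyMeasurable.mul (ihvc lam hlam).aestronglyMeasurable))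
      · intro x
        refine Eventually.of_forall fun t => ?_
        refine (norm_add_le _ _).trans ?_
        have h1 := ker_pointwise_bound (q := q) (hub lam hlam) (hDdb lam hlam) x t
        have h2 := ker_pointwise_bound (q := q) (ihvb lam hlam) (hDb lam hlam) x t
        calc ‖Dd lam (t-x) * (q t * uu q n lam t)‖ + ‖D lam (t-x) * (q t * vv q n lam t)‖
            ≤ 2/δ^2 * Bn * ‖q t‖ + 1/δ * C * ‖q t‖ := add_le_add h1 h2
          _ = (2/δ^2 * Bn + (1/δ) * C) * ‖q t‖ := by ring
      · exact hq.norm.const_mul _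
      · refine Eventually.of_forall fun t => ?_
        exact (((Dd_contY lam).comp (continuous_const.sub continuous_id)).mul
            continuous_const).add
          (((D_contY lam).comp (continuous_const.sub continuous_id)).mul continuous_const)
    -- bound on `vv (n+1)`
    have hboundv : ∃ C' : ℝ, 0 ≤ C' ∧ ∀ lam : ℂ, δ < lam.im → ∀ x,
        ‖vv q (n+1) lam x‖ ≤ C' := by
      refine ⟨(2/δ^2 * Bn + (1/δ) * C) * Nq, by positivity, ?_⟩
      intro lam hlam x
      have hIntDd := int_ker hq (ihc lam hlam).aestronglyMeasurable (hub lam hlam)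
        (Dd_contY lam) (hDdb lam hlam) x
      have hIntD := int_ker hq (ihvc lam hlam).aestronglyMeasurable (ihvb lam hlam)
        (D_contY lam) (hDb lam hlam) x
      have step1 : ‖vv q (n+1) lam x‖ ≤ ∫ t,
          ‖Dd lam (t - x) * (q t * uu q n lam t) + D lam (t - x) * (q t * vv q n lam t)‖ :=
        norm_integral_le_integral_norm _
      have step2 : (∫ t,
          ‖Dd lam (t - x) * (q t * uu q n lam t) + D lam (t - x) * (q t * vv q n lam t)‖)
          ≤ ∫ t, (2/δ^2 * Bn + (1/δ) * C) * ‖q t‖ := by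
        apply integral_mono (hIntDd.add hIntD).norm (hq.norm.const_mul _)
        intro t
        refine (norm_add_le _ _).trans ?_
        have h1 := ker_pointwise_bound (q := q) (hub lam hlam) (hDdb lam hlam) x t
        have h2 := ker_pointwise_bound (q := q) (ihvb lam hlam) (hDb lam hlam) x t
        simp only
        calc ‖Dd lam (t-x) * (q t * uu q n lam t)‖ + ‖D lam (t-x) * (q t * vv q n lam t)‖
            ≤ 2/δ^2 * Bn * ‖q t‖ + 1/δ * C * ‖q t‖ := add_le_add h1 h2
          _ = (2/δ^2 * Bn + (1/δ) * C) * ‖q t‖ := by ring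
      rw [integral_const_mul] at step2
      exact step1.trans step2
    -- derivative
    have hderiv : ∀ lam : ℂ, δ < lam.im → ∀ x,
        HasDerivAt (fun l => uu q (n+1) l x) (vv q (n+1) lam x) lam := by
      intro lam0 hlam0 x
      set ε := lam0.im - δ with hε
      have hεpos : 0 < ε := by rw [hε]; linarith
      have hball : ∀ l ∈ Metric.ball lam0 ε, δ < l.im := by
        intro l hl
        rw [Metric.mem_ball, Complex.dist_eq] at hl
        have h1 : |(l - lam0).im| ≤ ‖l - lam0‖ := Complex.abs_im_le_norm _
        rw [Complex.sub_im] at h1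
        have h2 := abs_lt.1 (lt_of_le_of_lt h1 hl)
        have := h2.1
        rw [hε] at this
        linarith
      have key := hasDerivAt_integral_of_dominated_loc_of_deriv_le (μ := volume)
        (𝕜 := ℂ) (x₀ := lam0)
        (F := fun l t => D l (t - x) * (q t * uu q n l t))
        (F' := fun l t => Dd l (t - x) * (q t * uu q n l t) + D l (t - x) * (q t * vv q n l t))
        (bound := fun t => (2/δ^2 * Bn + (1/δ) * C) * ‖q t‖)
        (Metric.ball_mem_nhds lam0 hεpos) ?_ ?_ ?_ ?_ ?_ ?_
      · have : HasDerivAt (fun l => ∫ t, D l (t - x) * (q t * uu q n l t))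
            (∫ t, (Dd lam0 (t - x) * (q t * uu q n lam0 t)
              + D lam0 (t - x) * (q t * vv q n lam0 t))) lam0 := key.2
        exact this
      · filter_upwards [Metric.ball_mem_nhds lam0 hεpos] with l hl
        exact (((D_contY l).comp (continuous_id.sub continuous_const)).aestronglyMeasurable.mul
          (hq.aestronglyMeasurable.mul (ihc l (hball l hl)).aestronglyMeasurable))
      · exact int_ker hq (ihc lam0 hlam0).aestronglyMeasurable (hub lam0 hlam0)
          (D_contY lam0) (hDb lam0 hlam0) x
      · exact (((Dd_contY lam0).comp
            (continuous_id.sub continuous_const)).aestronglyMeasurable.mul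
            (hq.aestronglyMeasurable.mul (ihc lam0 hlam0).aestronglyMeasurable)).add
          (((D_contY lam0).comp (continuous_id.sub continuous_const)).aestronglyMeasurable.mul
            (hq.aestronglyMeasurable.mul (ihvc lam0 hlam0).aestronglyMeasurable))
      · refine Eventually.of_forall fun t => fun l hl => ?_
        refine (norm_add_le _ _).trans ?_
        have h1 := ker_pointwise_bound (q := q) (hub l (hball l hl)) (hDdb l (hball l hl)) x t
        have h2 := ker_pointwise_bound (q := q) (ihvb l (hball l hl)) (hDb l (hball l hl)) x t
        calc ‖Dd l (t-x) * (q t * uu q n l t)‖ + ‖D l (t-x) * (q t * vv q n l t)‖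
            ≤ 2/δ^2 * Bn * ‖q t‖ + 1/δ * C * ‖q t‖ := add_le_add h1 h2
          _ = (2/δ^2 * Bn + (1/δ) * C) * ‖q t‖ := by ring
      · exact hq.norm.const_mul _
      · refine Eventually.of_forall fun t => fun l hl => ?_
        exact (hasDerivAt_D (im_ne (hδ.trans (hball l hl))) (t - x)).mul
          ((ihd l (hball l hl) t).const_mul (q t))
    exact ⟨hcont, hbound, hcontv, hboundv, hderiv⟩


noncomputable def ww (q : ℝ → ℂ) (m0 : ℝ → ℂ) (lam : ℂ) : ℕ → ℝ → ℂ
  | 0 => m0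
  | n+1 => fun x => ∫ t, D lam (t - x) * (q t * ww q m0 lam n t)


lemma rem (hq : Integrable q) {lam : ℂ} {δ : ℝ} (hδ : 0 < δ) (hlam : δ < lam.im)
    {m0 : ℝ → ℂ} (hmeas : AEStronglyMeasurable m0) {C : ℝ} (hC : ∀ x, ‖m0 x‖ ≤ C)
    (heq : ∀ x, m0 x = 1 + ∫ t in Set.Ioi x, D lam (t - x) * q t * m0 t) :
    ∀ n : ℕ, AEStronglyMeasurable (ww q m0 lam n)
      ∧ (∀ x, ‖ww q m0 lam n x‖ ≤ C * (Q q x ^ n / (δ ^ n * n.factorial)))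
      ∧ (∀ x, m0 x = (∑ i ∈ Finset.range n, uu q i lam x) + ww q m0 lam n x) := by
  have hC0 : 0 ≤ C := (norm_nonneg _).trans (hC 0)
  set Nq : ℝ := ∫ t, ‖q t‖ with hNq
  have hNq0 : 0 ≤ Nq := integral_nonneg fun t => norm_nonneg _
  have hDb : ∀ y, ‖D lam y‖ ≤ 1 / δ := fun y =>
    (D_bound (hδ.trans hlam) y).trans (oneDiv_im_le hδ hlam)
  intro n
  induction n with
  | zero =>
    refine ⟨hmeas, fun x => ?_, fun x => by simp [ww]⟩
    simpa [ww] using hC x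
  | succ n ih =>
    obtain ⟨ihm, ihb, ihe⟩ := ih
    -- uniform bound for `ww n`
    have ihub : ∀ x, ‖ww q m0 lam n x‖ ≤ C * (Nq ^ n / (δ ^ n * n.factorial)) := by
      intro x
      refine (ihb x).trans ?_
      have h1 : Q q x ^ n ≤ Nq ^ n := pow_le_pow_left₀ (Q_nonneg q x) (Q_le hq x) n
      gcongr
    have hIntW : ∀ x, Integrable (fun t => D lam (t - x) * (q t * ww q m0 lam n t)) :=
      fun x => int_ker hq ihm ihub (D_contY lam) hDb x
    -- measurability (indeed continuity) of `ww (n+1)`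
    have hmeas' : AEStronglyMeasurable (ww q m0 lam (n+1)) :=
      (cont_ker hq ihm ihub (D_contY lam) hDb).aestronglyMeasurable
    -- bound
    have hbound' : ∀ x, ‖ww q m0 lam (n+1) x‖
        ≤ C * (Q q x ^ (n+1) / (δ ^ (n+1) * (n+1).factorial)) := by
      intro x
      have step1 : ‖ww q m0 lam (n+1) x‖ ≤ ∫ t, ‖D lam (t - x) * (q t * ww q m0 lam n t)‖ :=
        norm_integral_le_integral_norm _
      have step2 : (∫ t, ‖D lam (t - x) * (q t * ww q m0 lam n t)‖)
          = ∫ t in Set.Ioi x, ‖D lam (t - x) * (q t * ww q m0 lam n t)‖ := by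
        symm
        apply setIntegral_eq_integral_of_forall_compl_eq_zero
        intro t ht
        have h1 : t - x ≤ 0 := by
          simp only [Set.mem_Ioi, not_lt] at ht
          linarith
        rw [D_zero lam h1, zero_mul, norm_zero]
      have step3 : (∫ t in Set.Ioi x, ‖D lam (t - x) * (q t * ww q m0 lam n t)‖)
          ≤ ∫ t in Set.Ioi x, (C/(δ^(n+1) * n.factorial)) * (Q q t ^ n * ‖q t‖) := by
        apply setIntegral_mono_on (hIntW x).norm.integrableOn
          ((intQk hq n).const_mul _).integrableOn measurableSet_Ioi
        intro t _
        rw [norm_mul, norm_mul]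
        calc ‖D lam (t-x)‖ * (‖q t‖ * ‖ww q m0 lam n t‖)
            ≤ (1/δ) * (‖q t‖ * (C * (Q q t ^ n / (δ^n * n.factorial)))) := by
              apply mul_le_mul (hDb _)
                (mul_le_mul_of_nonneg_left (ihb t) (norm_nonneg _))
                (by positivity) (by positivity)
          _ = (C/(δ^(n+1) * n.factorial)) * (Q q t ^ n * ‖q t‖) := by
              field_simp
              ring
      have step4 : (∫ t in Set.Ioi x, (C/(δ^(n+1) * n.factorial)) * (Q q t ^ n * ‖q t‖))
          ≤ (C/(δ^(n+1) * n.factorial)) * (Q q x ^ (n+1) / (n+1)) := by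
        rw [integral_const_mul]
        exact mul_le_mul_of_nonneg_left (keyQ hq n x) (by positivity)
      have final : (C/(δ^(n+1) * (n.factorial:ℝ))) * (Q q x ^ (n+1) / (n+1))
          = C * (Q q x ^ (n+1) / (δ^(n+1) * (n+1).factorial)) := by
        rw [Nat.factorial_succ]
        push_cast
        rw [div_mul_div_comm]
        rw [mul_div_assoc]
        congr 1
        rw [div_eq_div_iff (by positivity) (by positivity)]
        ring
      calc ‖ww q m0 lam (n+1) x‖ ≤ _ := step1
        _ = _ := step2
        _ ≤ _ := step3
        _ ≤ _ := step4
        _ = _ := final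
    -- the representation
    have hrep : ∀ x, m0 x = (∑ i ∈ Finset.range (n+1), uu q i lam x) + ww q m0 lam (n+1) x := by
      intro x
      have big := main_ind hq hδ
      have hIntU : ∀ i, Integrable (fun t => D lam (t - x) * (q t * uu q i lam t)) := by
        intro i
        have hubi : ∀ t, ‖uu q i lam t‖ ≤ Nq ^ i / (δ ^ i * i.factorial) := by
          intro t
          refine ((big i).2.1 lam hlam t).trans ?_
          have h1 : Q q t ^ i ≤ Nq ^ i := pow_le_pow_left₀ (Q_nonneg q t) (Q_le hq t) i
          gcongr
        exact int_ker hq ((big i).1 lam hlam).aestronglyMeasurable hubi (D_contY lam) hDb x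
      have hfull : (∫ t in Set.Ioi x, D lam (t - x) * q t * m0 t)
          = ∫ t, D lam (t - x) * (q t * m0 t) := by
        rw [show (fun t => D lam (t - x) * q t * m0 t)
            = fun t => D lam (t - x) * (q t * m0 t) from funext fun t => by ring]
        apply setIntegral_eq_integral_of_forall_compl_eq_zero
        intro t ht
        have h1 : t - x ≤ 0 := by
          simp only [Set.mem_Ioi, not_lt] at ht
          linarith
        rw [D_zero lam h1, zero_mul]
      have hsplit : (fun t => D lam (t - x) * (q t * m0 t))
          = fun t => (∑ i ∈ Finset.range n, D lam (t - x) * (q t * uu q i lam t))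
              + D lam (t - x) * (q t * ww q m0 lam n t) := by
        funext t
        rw [ihe t, mul_add, mul_add, Finset.mul_sum, Finset.mul_sum]
      have hint2 : (∫ t, D lam (t - x) * (q t * m0 t))
          = (∑ i ∈ Finset.range n, uu q (i+1) lam x) + ww q m0 lam (n+1) x := by
        rw [hsplit]
        rw [integral_add (integrable_finset_sum _ (fun i _ => hIntU i)) (hIntW x)]
        congr 1
        rw [integral_finset_sum _ (fun i _ => hIntU i)]
        exact Finset.sum_congr rfl fun i _ => rfl
      have := heq x
      rw [hfull, hint2] at this
      rw [this, Finset.sum_range_succ']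
      have h0 : uu q 0 lam x = 1 := rfl
      rw [h0]
      ring
    exact ⟨hmeas', hbound', hrep⟩



lemma int_qf (hq : Integrable q) {f : ℝ → ℂ} (hf : AEStronglyMeasurable f)
    {B : ℝ} (hB : ∀ t, ‖f t‖ ≤ B) : Integrable (fun t => q t * f t) := by
  apply Integrable.mono' (hq.norm.const_mul B) (hq.aestronglyMeasurable.mul hf)
  refine Eventually.of_forall fun t => ?_
  calc ‖q t * f t‖ = ‖q t‖ * ‖f t‖ := norm_mul _ _
    _ ≤ ‖q t‖ * B := mul_le_mul_of_nonneg_left (hB t) (norm_nonneg _)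
    _ = B * ‖q t‖ := mul_comm _ _

lemma m_bound (hq : Integrable q) {lam : ℂ} {δ : ℝ} (hδ : 0 < δ) (hlam : δ < lam.im)
    {m0 : ℝ → ℂ} (hmeas : AEStronglyMeasurable m0) {C : ℝ} (hC : ∀ x, ‖m0 x‖ ≤ C)
    (heq : ∀ x, m0 x = 1 + ∫ t in Set.Ioi x, D lam (t - x) * q t * m0 t) :
    ∀ x, ‖m0 x‖ ≤ Real.exp ((∫ t, ‖q t‖) / δ) := by
  intro x
  set Nq : ℝ := ∫ t, ‖q t‖ with hNq
  have hNq0 : 0 ≤ Nq := integral_nonneg fun t => norm_nonneg _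
  have hC0 : 0 ≤ C := (norm_nonneg _).trans (hC 0)
  have h := rem hq hδ hlam hmeas hC heq
  have big := main_ind hq hδ
  have key : ∀ n : ℕ, ‖m0 x‖ ≤ Real.exp (Nq/δ) + C * ((Nq/δ)^n / n.factorial) := by
    intro n
    have he := (h n).2.2 x
    have h1 : ‖m0 x‖ ≤ (∑ i ∈ Finset.range n, ‖uu q i lam x‖) + ‖ww q m0 lam n x‖ := by
      rw [he]
      exact (norm_add_le _ _).trans (add_le_add (norm_sum_le _ _) le_rfl)
    have h2 : (∑ i ∈ Finset.range n, ‖uu q i lam x‖)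
        ≤ ∑ i ∈ Finset.range n, (Nq/δ)^i / i.factorial := by
      apply Finset.sum_le_sum
      intro i _
      refine ((big i).2.1 lam hlam x).trans ?_
      rw [div_pow, div_div]
      have hp : Q q x ^ i ≤ Nq ^ i := pow_le_pow_left₀ (Q_nonneg q x) (Q_le hq x) i
      gcongr
    have h3 : (∑ i ∈ Finset.range n, (Nq/δ)^i / i.factorial) ≤ Real.exp (Nq/δ) :=
      Real.sum_le_exp_of_nonneg (by positivity) n
    have h4 : ‖ww q m0 lam n x‖ ≤ C * ((Nq/δ)^n / n.factorial) := by
      refine ((h n).2.1 x).trans ?_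
      rw [div_pow, div_div]
      have hp : Q q x ^ n ≤ Nq ^ n := pow_le_pow_left₀ (Q_nonneg q x) (Q_le hq x) n
      gcongr
    linarith
  have hlim : Tendsto (fun n : ℕ => Real.exp (Nq/δ) + C * ((Nq/δ)^n / n.factorial)) atTop
      (𝓝 (Real.exp (Nq/δ))) := by
    have h0 := FloorSemiring.tendsto_pow_div_factorial_atTop (K := ℝ) (Nq/δ)
    have h1 := h0.const_mul C
    simpa using tendsto_const_nhds.add h1
  exact ge_of_tendsto hlim (Eventually.of_forall key)

lemma sN_diff (hq : Integrable q) {δ : ℝ} (hδ : 0 < δ) (N : ℕ) :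
    DifferentiableOn ℂ
      (fun lam => 1 - (2*Complex.I*lam)⁻¹ * ∑ n ∈ Finset.range N, ∫ t, q t * uu q n lam t)
      {z : ℂ | δ < z.im} := by
  set Nq : ℝ := ∫ t, ‖q t‖ with hNq
  have hNq0 : 0 ≤ Nq := integral_nonneg fun t => norm_nonneg _
  have big := main_ind hq hδ
  intro lam0 hlam0
  apply DifferentiableAt.differentiableWithinAt
  have him : δ < lam0.im := hlam0
  have hne : (2*Complex.I*lam0) ≠ 0 := two_I_lam_ne (im_ne (hδ.trans him))
  apply DifferentiableAt.sub (differentiableAt_const 1)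
  apply DifferentiableAt.mul
  · exact DifferentiableAt.inv (by fun_prop) hne
  · apply DifferentiableAt.fun_sum
    intro n _
    obtain ⟨C, hC0, hvb⟩ := (big n).2.2.2.1
    have hub : ∀ lam : ℂ, δ < lam.im → ∀ t, ‖uu q n lam t‖ ≤ Nq ^ n / (δ ^ n * n.factorial) := by
      intro lam hlam t
      refine ((big n).2.1 lam hlam t).trans ?_
      have hp : Q q t ^ n ≤ Nq ^ n := pow_le_pow_left₀ (Q_nonneg q t) (Q_le hq t) n
      gcongr
    set ε := lam0.im - δ with hε
    have hεpos : 0 < ε := by rw [hε]; linarith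
    have hball : ∀ l ∈ Metric.ball lam0 ε, δ < l.im := by
      intro l hl
      rw [Metric.mem_ball, Complex.dist_eq] at hl
      have h1 : |(l - lam0).im| ≤ ‖l - lam0‖ := Complex.abs_im_le_norm _
      rw [Complex.sub_im] at h1
      have h2 := (abs_lt.1 (lt_of_le_of_lt h1 hl)).1
      rw [hε] at h2
      linarith
    have key := hasDerivAt_integral_of_dominated_loc_of_deriv_le (μ := volume)
      (𝕜 := ℂ) (x₀ := lam0)
      (F := fun l t => q t * uu q n l t)
      (F' := fun l t => q t * vv q n l t)
      (bound := fun t => C * ‖q t‖)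
      (Metric.ball_mem_nhds lam0 hεpos) ?_ ?_ ?_ ?_ ?_ ?_
    · exact key.2.differentiableAt
    · filter_upwards [Metric.ball_mem_nhds lam0 hεpos] with l hl
      exact hq.aestronglyMeasurable.mul ((big n).1 l (hball l hl)).aestronglyMeasurable
    · exact int_qf hq ((big n).1 lam0 him).aestronglyMeasurable (hub lam0 him)
    · exact hq.aestronglyMeasurable.mul ((big n).2.2.1 lam0 him).aestronglyMeasurable
    · refine Eventually.of_forall fun t l hl => ?_
      calc ‖q t * vv q n l t‖ = ‖q t‖ * ‖vv q n l t‖ := norm_mul _ _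
        _ ≤ ‖q t‖ * C := mul_le_mul_of_nonneg_left (hvb l (hball l hl) t) (norm_nonneg _)
        _ = C * ‖q t‖ := mul_comm _ _
    · exact hq.norm.const_mul _
    · refine Eventually.of_forall fun t l hl => ?_
      exact ((big n).2.2.2.2 l (hball l hl) t).const_mul (q t)

end JostAux

open Set Filter Topology in
open JostAux in
theorem coefficient_a_holomorphic (q : ℝ → ℂ) (hq : Integrable q)
    (m : ℂ → ℝ → ℂ)
    (hm : ∀ lam : ℂ, 0 < lam.im →
      Measurable (m lam) ∧ (∃ C, ∀ x, ‖m lam x‖ ≤ C) ∧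
      (∀ x, m lam x = 1 + ∫ t in Set.Ioi x, D lam (t - x) * q t * m lam t)) :
    DifferentiableOn ℂ
      (fun lam : ℂ => 1 - (2 * Complex.I * lam)⁻¹ * ∫ t : ℝ, q t * m lam t)
      {z : ℂ | 0 < z.im} := by
  intro lam0 hlam0
  have hlam0' : 0 < lam0.im := hlam0
  set δ : ℝ := lam0.im / 2 with hδdef
  have hδ : 0 < δ := by rw [hδdef]; linarith
  set U : Set ℂ := {z : ℂ | δ < z.im} with hU
  have hUopen : IsOpen U := isOpen_lt continuous_const Complex.continuous_im
  have hmem : lam0 ∈ U := by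
    simp only [hU, Set.mem_setOf_eq, hδdef]
    linarith
  clear_value δ
  set Nq : ℝ := ∫ t, ‖q t‖ with hNq
  have hNq0 : 0 ≤ Nq := integral_nonneg fun t => norm_nonneg _
  set M : ℝ := Real.exp (Nq / δ) with hM
  have hM0 : 0 ≤ M := le_of_lt (Real.exp_pos _)
  have big := main_ind hq hδ
  -- uniform bound on m over U
  have hMbound : ∀ lam ∈ U, ∀ x, ‖m lam x‖ ≤ M := by
    intro lam hlam x
    have him : δ < lam.im := hlam
    obtain ⟨hmeas, ⟨C, hC⟩, heq⟩ := hm lam (hδ.trans him)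
    exact m_bound hq hδ him hmeas.aestronglyMeasurable hC heq x
  -- partial sums
  have hGdiff : ∀ N : ℕ, DifferentiableOn ℂ
      (fun lam => 1 - (2*Complex.I*lam)⁻¹ * ∑ n ∈ Finset.range N, ∫ t, q t * uu q n lam t)
      U := fun N => sN_diff hq hδ N
  -- uniform convergence
  have hconv : TendstoUniformlyOn
      (fun N lam => 1 - (2*Complex.I*lam)⁻¹ * ∑ n ∈ Finset.range N, ∫ t, q t * uu q n lam t)
      (fun lam : ℂ => 1 - (2 * Complex.I * lam)⁻¹ * ∫ t : ℝ, q t * m lam t)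
      atTop U := by
    rw [Metric.tendstoUniformlyOn_iff]
    intro ε hε
    have hlim : Tendsto (fun N : ℕ => (1/(2*δ)) * (M * ((Nq/δ)^N / N.factorial) * Nq)) atTop
        (𝓝 0) := by
      have h0 := FloorSemiring.tendsto_pow_div_factorial_atTop (K := ℝ) (Nq/δ)
      have h1 := ((h0.const_mul M).mul_const Nq).const_mul (1/(2*δ))
      simpa using h1
    filter_upwards [hlim.eventually (gt_mem_nhds hε)] with N hN
    intro lam hlamU
    have him : δ < lam.im := hlamU
    have him0 : 0 < lam.im := hδ.trans him
    obtain ⟨hmeasM, ⟨C, hC⟩, heq⟩ := hm lam him0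
    have hMb : ∀ x, ‖m lam x‖ ≤ M := hMbound lam hlamU
    have hrem := rem hq hδ him hmeasM.aestronglyMeasurable hMb heq
    -- integrability facts
    have hub : ∀ n : ℕ, ∀ t, ‖uu q n lam t‖ ≤ Nq ^ n / (δ ^ n * n.factorial) := by
      intro n t
      refine ((big n).2.1 lam him t).trans ?_
      have hp : Q q t ^ n ≤ Nq ^ n := pow_le_pow_left₀ (Q_nonneg q t) (Q_le hq t) n
      gcongr
    have hqu_int : ∀ n : ℕ, Integrable (fun t => q t * uu q n lam t) := fun n =>
      int_qf hq ((big n).1 lam him).aestronglyMeasurable (hub n)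
    have hwwb : ∀ t, ‖ww q (m lam) lam N t‖ ≤ M * (Nq ^ N / (δ ^ N * N.factorial)) := by
      intro t
      refine ((hrem N).2.1 t).trans ?_
      have hp : Q q t ^ N ≤ Nq ^ N := pow_le_pow_left₀ (Q_nonneg q t) (Q_le hq t) N
      gcongr
    have hqw_int : Integrable (fun t => q t * ww q (m lam) lam N t) :=
      int_qf hq (hrem N).1 hwwb
    -- splitting the integral
    have hkey : (∫ t, q t * m lam t)
        = (∑ n ∈ Finset.range N, ∫ t, q t * uu q n lam t)
          + ∫ t, q t * ww q (m lam) lam N t := by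
      have hfun : (fun t => q t * m lam t)
          = fun t => (∑ n ∈ Finset.range N, q t * uu q n lam t)
              + q t * ww q (m lam) lam N t := by
        funext t
        rw [(hrem N).2.2 t, mul_add, Finset.mul_sum]
      rw [hfun, integral_add (integrable_finset_sum _ (fun n _ => hqu_int n)) hqw_int,
        integral_finset_sum _ (fun n _ => hqu_int n)]
    rw [dist_eq_norm]
    have hdiff : (1 - (2 * Complex.I * lam)⁻¹ * ∫ t : ℝ, q t * m lam t)
        - (1 - (2*Complex.I*lam)⁻¹ * ∑ n ∈ Finset.range N, ∫ t, q t * uu q n lam t)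
        = -((2 * Complex.I * lam)⁻¹ * ∫ t, q t * ww q (m lam) lam N t) := by
      rw [hkey]
      ring
    rw [hdiff, norm_neg, norm_mul]
    -- norm bounds
    have hinv : ‖(2 * Complex.I * lam)⁻¹‖ ≤ 1/(2*δ) := by
      rw [norm_inv, norm_two_I_lam]
      have h1 : 2 * δ ≤ 2 * ‖lam‖ := by
        have := (im_le_norm lam)
        linarith
      rw [one_div]
      exact inv_anti₀ (by linarith) h1
    have hIw : ‖∫ t, q t * ww q (m lam) lam N t‖ ≤ M * (Nq ^ N / (δ ^ N * N.factorial)) * Nq := by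
      refine (norm_integral_le_integral_norm _).trans ?_
      have h2 : (∫ t, ‖q t * ww q (m lam) lam N t‖)
          ≤ ∫ t, M * (Nq ^ N / (δ ^ N * N.factorial)) * ‖q t‖ := by
        apply integral_mono hqw_int.norm (hq.norm.const_mul _)
        intro t
        calc ‖q t * ww q (m lam) lam N t‖ = ‖q t‖ * ‖ww q (m lam) lam N t‖ := norm_mul _ _
          _ ≤ ‖q t‖ * (M * (Nq ^ N / (δ ^ N * N.factorial))) :=
              mul_le_mul_of_nonneg_left (hwwb t) (norm_nonneg _)
          _ = M * (Nq ^ N / (δ ^ N * N.factorial)) * ‖q t‖ := mul_comm _ _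
      rw [integral_const_mul] at h2
      exact h2
    have hfin : ‖(2 * Complex.I * lam)⁻¹‖ * ‖∫ t, q t * ww q (m lam) lam N t‖
        ≤ (1/(2*δ)) * (M * ((Nq/δ)^N / N.factorial) * Nq) := by
      have heqpow : M * (Nq ^ N / (δ ^ N * N.factorial)) * Nq
          = M * ((Nq/δ)^N / N.factorial) * Nq := by
        rw [div_pow, div_div]
      calc ‖(2 * Complex.I * lam)⁻¹‖ * ‖∫ t, q t * ww q (m lam) lam N t‖
          ≤ (1/(2*δ)) * (M * (Nq ^ N / (δ ^ N * N.factorial)) * Nq) := by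
            apply mul_le_mul hinv hIw (norm_nonneg _) (by positivity)
        _ = (1/(2*δ)) * (M * ((Nq/δ)^N / N.factorial) * Nq) := by rw [heqpow]
    exact lt_of_le_of_lt hfin hN
  have hdOn : DifferentiableOn ℂ
      (fun lam : ℂ => 1 - (2 * Complex.I * lam)⁻¹ * ∫ t : ℝ, q t * m lam t) U :=
    (hconv.tendstoLocallyUniformlyOn).differentiableOn (Eventually.of_forall hGdiff) hUopen
  exact (hdOn.differentiableAt (hUopen.mem_nhds hmem)).differentiableWithinAt
end
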